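/- arXiv:2009.04044 — 4 statements merged into one kernel-verified Lean document; each statement's English description precedes it below -/
import Mathlib

section
/- Let A ⊂ Z^d (d ≥ 3) be finite and connected with Z^d \ A connected, and let U = ∪_{y∈A} {z ∈ R^d : |z − y|_∞ ≤ 1}. If y1, y2 lie on the internal boundary ∂A of A (vertices of A adjacent to the complement), then there exists a finite sequence z_1 = y_1, z_2, ..., z_m = y_2 of vertices in ∂A with |z_i − z_{i+1}|_∞ = 1 for all i; i.e., ∂A is connected in the graph on Z^d where vertices at l^∞ distance 1 are adjacent. -/
open scoped BigOperators ENNReal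
open MeasureTheory

namespace Paper

abbrev V (d : ℕ) := Fin d → ℤ

def stepVec (d : ℕ) (s : Fin d × Bool) : V d :=
  if s.2 then Pi.single s.1 1 else Pi.single s.1 (-1)

/-- closed l^∞ ball of real radius `R` around `x` in `ℤ^d`. -/
def ball (d : ℕ) (x : V d) (R : ℝ) : Set (V d) :=
  {z | ∀ i, |((z i - x i : ℤ) : ℝ)| ≤ R}

/-- l^∞ norm (as a natural number). -/
def linfN (d : ℕ) (v : V d) : ℕ := Finset.univ.sup fun i => (v i).natAbs

/-- nearest neighbour adjacency in `ℤ^d`. -/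
def nnAdj (d : ℕ) (x y : V d) : Prop := (∑ i, (x i - y i).natAbs) = 1

/-- *-adjacency: distinct points at l^∞ distance 1. -/
def starAdj (d : ℕ) (x y : V d) : Prop := x ≠ y ∧ ∀ i, (x i - y i).natAbs ≤ 1

/-- connectivity of a set under a given adjacency relation. -/
def connIn (d : ℕ) (S : Set (V d)) (adj : V d → V d → Prop) : Prop :=
  ∀ a ∈ S, ∀ b ∈ S, Relation.ReflTransGen (fun p q => adj p q ∧ p ∈ S ∧ q ∈ S) a b

/-- the internal (vertex) boundary of `A`. -/
def innerBd (d : ℕ) (A : Set (V d)) : Set (V d) :=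
  {x ∈ A | ∃ z, z ∉ A ∧ nnAdj d x z}

def Ev (d : ℕ) (i : Fin d) : V d := Pi.single i 1

lemma Ev_apply (d : ℕ) (i k : Fin d) : Ev d i k = if i = k then 1 else 0 := by
  simp [Ev, Pi.single_apply, eq_comm]

lemma nnAdj_add_Ev (d : ℕ) (x : V d) (i : Fin d) : nnAdj d (x + Ev d i) x := by
  have h : ∀ k, ((x + Ev d i) k - x k).natAbs = if i = k then 1 else 0 := by
    intro k
    have : (x + Ev d i) k = x k + Ev d i k := rfl
    rw [this, Ev_apply]
    split <;> simp
  unfold nnAdj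
  rw [Finset.sum_congr rfl (fun k _ => h k)]
  simp

lemma nnAdj_symm {d : ℕ} {x y : V d} (h : nnAdj d x y) : nnAdj d y x := by
  unfold nnAdj at *
  rw [← h]
  apply Finset.sum_congr rfl
  intro k _
  omega

lemma nnAdj_cases {d : ℕ} {x y : V d} (h : nnAdj d x y) :
    ∃ i, x = y + Ev d i ∨ y = x + Ev d i := by
  unfold nnAdj at h
  have hex : ∃ i, (x i - y i).natAbs ≠ 0 := by
    by_contra hall
    push_neg at hall
    rw [Finset.sum_eq_zero (fun k _ => hall k)] at h
    omega
  obtain ⟨i, hi⟩ := hex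
  have hsplit : (x i - y i).natAbs + ∑ k ∈ Finset.univ.erase i, (x k - y k).natAbs = 1 := by
    rw [Finset.add_sum_erase Finset.univ (fun k => (x k - y k).natAbs) (Finset.mem_univ i)]; exact h
  have hi1 : (x i - y i).natAbs = 1 := by omega
  have hrest : ∑ k ∈ Finset.univ.erase i, (x k - y k).natAbs = 0 := by omega
  have hzero : ∀ k, k ≠ i → x k = y k := by
    intro k hk
    have := Finset.sum_eq_zero_iff.mp hrest k (by simp [hk])
    omega
  rcases (by omega : x i - y i = 1 ∨ x i - y i = -1) with hc | hc
  · refine ⟨i, Or.inl ?_⟩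
    funext k
    have : (y + Ev d i) k = y k + Ev d i k := rfl
    rw [this, Ev_apply]
    by_cases hk : k = i
    · subst hk; simp; omega
    · rw [if_neg (fun hh => hk hh.symm)]; rw [hzero k hk]; ring
  · refine ⟨i, Or.inr ?_⟩
    funext k
    have : (x + Ev d i) k = x k + Ev d i k := rfl
    rw [this, Ev_apply]
    by_cases hk : k = i
    · subst hk; simp; omega
    · rw [if_neg (fun hh => hk hh.symm)]; rw [hzero k hk]; ring


/-- parity-sum of `f` over the integer interval between `0` and `n`. -/
def L (f : ℤ → ZMod 2) (n : ℤ) : ZMod 2 :=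
  if 0 ≤ n then ∑ k ∈ Finset.range n.toNat, f k else ∑ k ∈ Finset.range (-n).toNat, f (-1 - k)

lemma L_zero (f : ℤ → ZMod 2) : L f 0 = 0 := by simp [L]

lemma L_succ (f : ℤ → ZMod 2) (n : ℤ) : L f (n + 1) = L f n + f n := by
  rcases le_or_gt 0 n with hn | hn
  · rw [L, L, if_pos (by omega), if_pos hn]
    have h1 : (n + 1).toNat = n.toNat + 1 := by omega
    rw [h1, Finset.sum_range_succ]
    congr 2
    omega
  · rcases eq_or_lt_of_le (by omega : n ≤ -1) with he | hlt
    · subst he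
      have h1 : L f (-1 + 1) = 0 := by norm_num [L]
      have h2 : L f (-1) = f (-1) := by norm_num [L]
      rw [h1, h2, CharTwo.add_self_eq_zero]
    · rw [L, L, if_neg (by omega), if_neg (by omega)]
      have h1 : (-n).toNat = (-(n + 1)).toNat + 1 := by omega
      rw [h1, Finset.sum_range_succ]
      have h2 : (-1 - ((-(n + 1)).toNat : ℤ)) = n := by omega
      rw [h2, add_assoc, CharTwo.add_self_eq_zero, add_zero]

section Pot

variable {d : ℕ} (φ : V d → V d → ZMod 2)

/-- parity-sum of `φ` over the steps of a line segment in direction `i`. -/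
def LS (b : V d) (i : Fin d) (n : ℤ) : ZMod 2 :=
  L (fun k => φ (b + k • Ev d i) (b + (k + 1) • Ev d i)) n

lemma LS_zero (b : V d) (i : Fin d) : LS φ b i 0 = 0 := L_zero _

lemma LS_succ (b : V d) (i : Fin d) (n : ℤ) :
    LS φ b i (n + 1) = LS φ b i n + φ (b + n • Ev d i) (b + (n + 1) • Ev d i) :=
  L_succ _ n

variable (hsq : ∀ (p : V d) (i j : Fin d),
    φ p (p + Ev d i) + φ (p + Ev d j) (p + Ev d i + Ev d j) =
    φ p (p + Ev d j) + φ (p + Ev d i) (p + Ev d i + Ev d j))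

include hsq in
lemma ladder (b : V d) (i j : Fin d) (n : ℤ) :
    LS φ (b + Ev d j) i n + LS φ b i n =
      φ b (b + Ev d j) + φ (b + n • Ev d i) (b + n • Ev d i + Ev d j) := by
  induction n using Int.induction_on with
  | zero => simp [LS_zero, CharTwo.add_self_eq_zero]
  | succ n ih =>
    rw [LS_succ, LS_succ]
    have hs := hsq (b + (n : ℤ) • Ev d i) i j
    have e1 : b + Ev d j + (n : ℤ) • Ev d i = b + (n : ℤ) • Ev d i + Ev d j := by abel
    have e2 : b + Ev d j + ((n : ℤ) + 1) • Ev d i = b + (n : ℤ) • Ev d i + Ev d i + Ev d j := by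
      rw [add_smul, one_smul]; abel
    have e3 : b + ((n : ℤ) + 1) • Ev d i = b + (n : ℤ) • Ev d i + Ev d i := by
      rw [add_smul, one_smul]; abel
    rw [e1, e2, e3]
    have h2 : (2 : ZMod 2) = 0 := by decide
    linear_combination ih + hs +
      φ (b + (n : ℤ) • Ev d i) (b + (n : ℤ) • Ev d i + Ev d j) * h2
  | pred n ih =>
    have hrec1 := LS_succ φ (b + Ev d j) i (-(n : ℤ) - 1)
    have hrec2 := LS_succ φ b i (-(n : ℤ) - 1)
    have hs := hsq (b + (-(n : ℤ) - 1) • Ev d i) i j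
    have e0 : (-(n : ℤ) - 1 + 1) = -(n : ℤ) := by ring
    rw [e0] at hrec1 hrec2
    have e1 : b + Ev d j + (-(n : ℤ) - 1) • Ev d i = b + (-(n : ℤ) - 1) • Ev d i + Ev d j := by
      abel
    have e2 : b + Ev d j + (-(n : ℤ)) • Ev d i = b + (-(n : ℤ) - 1) • Ev d i + Ev d i + Ev d j := by
      have : (-(n : ℤ)) = (-(n : ℤ) - 1) + 1 := by ring
      rw [this, add_smul, one_smul]; abel
    have e3 : b + (-(n : ℤ)) • Ev d i = b + (-(n : ℤ) - 1) • Ev d i + Ev d i := by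
      have : (-(n : ℤ)) = (-(n : ℤ) - 1) + 1 := by ring
      rw [this, add_smul, one_smul]; abel
    rw [e1, e2] at hrec1
    rw [e3] at hrec2 ih
    have h2 : (2 : ZMod 2) = 0 := by decide
    linear_combination ih + hs - hrec1 - hrec2 +
      (φ (b + (-(n : ℤ) - 1) • Ev d i + Ev d i) (b + (-(n : ℤ) - 1) • Ev d i + Ev d i + Ev d j)
       - φ (b + (-(n : ℤ) - 1) • Ev d i) (b + (-(n : ℤ) - 1) • Ev d i + Ev d i)
       - φ (b + (-(n : ℤ) - 1) • Ev d i + Ev d j) (b + (-(n : ℤ) - 1) • Ev d i + Ev d i + Ev d j)) * h2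

/-- truncation: keep the first `m` coordinates, zero out the rest. -/
def tr (d : ℕ) (m : ℕ) (x : V d) : V d := fun j => if (j : ℕ) < m then x j else 0

lemma tr_top {d : ℕ} (x : V d) : tr d d x = x := by
  funext k; simp [tr, k.isLt]

lemma tr_add_Ev_of_le {d : ℕ} {m : ℕ} {j : Fin d} (h : m ≤ (j : ℕ)) (x : V d) :
    tr d m (x + Ev d j) = tr d m x := by
  funext k
  simp only [tr]
  split
  · next hk =>
    have hjk : j ≠ k := by intro he; subst he; omega
    show x k + Ev d j k = x k
    rw [Ev_apply, if_neg hjk, add_zero]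
  · rfl

lemma tr_add_Ev_of_lt {d : ℕ} {m : ℕ} {j : Fin d} (h : (j : ℕ) < m) (x : V d) :
    tr d m (x + Ev d j) = tr d m x + Ev d j := by
  funext k
  show (if (k : ℕ) < m then x k + Ev d j k else 0) = (if (k : ℕ) < m then x k else 0) + Ev d j k
  by_cases hk : (k : ℕ) < m
  · rw [if_pos hk, if_pos hk]
  · rw [if_neg hk, if_neg hk, Ev_apply, if_neg (by intro he; subst he; omega), add_zero]

lemma tr_succ {d : ℕ} (i : Fin d) (x : V d) :
    tr d i x + x i • Ev d i = tr d ((i : ℕ) + 1) x := by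
  funext k
  show (if (k : ℕ) < (i : ℕ) then x k else 0) + x i • Ev d i k
      = (if (k : ℕ) < (i : ℕ) + 1 then x k else 0)
  rw [Ev_apply, smul_eq_mul]
  by_cases hik : i = k
  · subst hik
    rw [if_pos rfl, if_neg (lt_irrefl _), if_pos (by omega)]
    ring
  · rw [if_neg hik, mul_zero, add_zero]
    have hne : (k : ℕ) ≠ (i : ℕ) := fun he => hik (Fin.val_injective he.symm)
    by_cases hk : (k : ℕ) < (i : ℕ)
    · rw [if_pos hk, if_pos (by omega)]
    · rw [if_neg hk, if_neg (by omega)]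

/-- the potential: parity of `φ` integrated along the staircase path from the origin. -/
def pot {d : ℕ} (φ : V d → V d → ZMod 2) (x : V d) : ZMod 2 :=
  ∑ i : Fin d, LS φ (tr d i x) i (x i)

include hsq in
lemma pot_step (x : V d) (j : Fin d) :
    pot φ (x + Ev d j) + pot φ x = φ x (x + Ev d j) := by
  classical
  have h2 : (2 : ZMod 2) = 0 := by decide
  set G : ℕ → ZMod 2 := fun m => φ (tr d m x) (tr d m x + Ev d j) with hGdef
  set U : ℕ → ZMod 2 :=
    fun m => if m < (j : ℕ) then 0 else (G (m + 1) + if (j : ℕ) < m then G m else 0) with hUdef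
  have hterm : ∀ i : Fin d,
      LS φ (tr d i (x + Ev d j)) i ((x + Ev d j) i) + LS φ (tr d i x) i (x i) = U (i : ℕ) := by
    intro i
    rcases lt_trichotomy (i : ℕ) (j : ℕ) with hlt | heq | hgt
    · rw [hUdef]
      simp only []
      rw [if_pos hlt]
      have h1 : tr d i (x + Ev d j) = tr d i x := tr_add_Ev_of_le (le_of_lt hlt) x
      have hji : j ≠ i := by intro he; subst he; omega
      have hx : (x + Ev d j) i = x i := by
        show x i + Ev d j i = x i
        rw [Ev_apply, if_neg hji, add_zero]
      rw [h1, hx, CharTwo.add_self_eq_zero]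
    · have hij : i = j := Fin.val_injective heq
      subst hij
      rw [hUdef]
      simp only []
      rw [if_neg (lt_irrefl _), if_neg (lt_irrefl _), add_zero]
      have h1 : tr d i (x + Ev d i) = tr d i x := tr_add_Ev_of_le (le_refl _) x
      have hx : (x + Ev d i) i = x i + 1 := by
        show x i + Ev d i i = x i + 1
        rw [Ev_apply, if_pos rfl]
      rw [h1, hx, LS_succ]
      have hp1 : tr d i x + x i • Ev d i = tr d ((i : ℕ) + 1) x := tr_succ i x
      have hp2 : tr d i x + (x i + 1) • Ev d i = tr d ((i : ℕ) + 1) x + Ev d i := by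
        rw [add_smul, one_smul, ← add_assoc, hp1]
      rw [hp1, hp2, hGdef]
      simp only []
      linear_combination (LS φ (tr d i x) i (x i)) * h2
    · rw [hUdef]
      simp only []
      rw [if_neg (by omega), if_pos hgt]
      have h1 : tr d i (x + Ev d j) = tr d i x + Ev d j := tr_add_Ev_of_lt hgt x
      have hji : j ≠ i := by intro he; subst he; omega
      have hx : (x + Ev d j) i = x i := by
        show x i + Ev d j i = x i
        rw [Ev_apply, if_neg hji, add_zero]
      rw [h1, hx, ladder φ hsq (tr d i x) i j (x i), tr_succ i x, hGdef]
      simp only []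
      ring
  have hsum : pot φ (x + Ev d j) + pot φ x = ∑ i : Fin d, U (i : ℕ) := by
    rw [pot, pot, ← Finset.sum_add_distrib]
    exact Finset.sum_congr rfl (fun i _ => hterm i)
  rw [hsum, Fin.sum_univ_eq_sum_range U d]
  have hjd : (j : ℕ) < d := j.isLt
  have hsub : ∑ m ∈ Finset.range d, U m = ∑ m ∈ Finset.Ico (j : ℕ) d, U m := by
    symm
    apply Finset.sum_subset
    · intro m hm
      rw [Finset.mem_Ico] at hm
      exact Finset.mem_range.mpr hm.2
    · intro m hm hnot
      rw [Finset.mem_range] at hm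
      rw [Finset.mem_Ico] at hnot
      push_neg at hnot
      have hmj : m < (j : ℕ) := by omega
      rw [hUdef]
      simp only []
      rw [if_pos hmj]
  rw [hsub, Finset.sum_eq_sum_Ico_succ_bot hjd]
  have hUj : U (j : ℕ) = G ((j : ℕ) + 1) := by
    rw [hUdef]; simp only []; rw [if_neg (lt_irrefl _), if_neg (lt_irrefl _), add_zero]
  have hUm : ∀ m ∈ Finset.Ico ((j : ℕ) + 1) d, U m = G (m + 1) + G m := by
    intro m hm
    rw [Finset.mem_Ico] at hm
    rw [hUdef]
    simp only []
    rw [if_neg (by omega), if_pos (by omega)]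
  rw [hUj, Finset.sum_congr rfl hUm]
  have htel : ∀ n : ℕ, (j : ℕ) + 1 ≤ n →
      ∑ m ∈ Finset.Ico ((j : ℕ) + 1) n, (G (m + 1) + G m) = G n + G ((j : ℕ) + 1) := by
    intro n hn
    induction n, hn using Nat.le_induction with
    | base => rw [Finset.Ico_self, Finset.sum_empty, CharTwo.add_self_eq_zero]
    | succ n hn ih =>
      rw [Finset.sum_Ico_succ_top hn, ih]
      linear_combination (G n) * h2
  rw [htel d (by omega)]
  have hGd : G d = φ x (x + Ev d j) := by rw [hGdef]; simp only []; rw [tr_top]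
  rw [← hGd]
  linear_combination (G ((j : ℕ) + 1)) * h2

variable (hsym : ∀ x y : V d, φ x y = φ y x)

include hsq hsym in
lemma pot_nn {x y : V d} (h : nnAdj d x y) : pot φ x + pot φ y = φ x y := by
  rcases nnAdj_cases h with ⟨i, hc | hc⟩
  · subst hc
    rw [hsym]
    exact pot_step φ hsq y i
  · subst hc
    rw [add_comm]
    exact pot_step φ hsq x i

include hsq hsym in
lemma pot_const {S : Set (V d)}
    (hS : ∀ p q : V d, p ∈ S → q ∈ S → nnAdj d p q → φ p q = 0)
    {a b : V d} (h : Relation.ReflTransGen (fun p q => nnAdj d p q ∧ p ∈ S ∧ q ∈ S) a b) :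
    pot φ a = pot φ b := by
  induction h with
  | refl => rfl
  | @tail b' c' h1 h2 ih =>
    obtain ⟨hadj, hp, hq⟩ := h2
    have hnn := pot_nn φ hsq hsym hadj
    rw [hS _ _ hp hq hadj] at hnn
    have h2' : (2 : ZMod 2) = 0 := by decide
    rw [ih]
    linear_combination hnn - (pot φ c') * h2'

end Pot

section Concrete

variable {d : ℕ} (A : Set (V d))

/-- oriented boundary edges: tail in `A`, head outside. -/
def Dset : Set (V d × V d) := {e | e.1 ∈ A ∧ e.2 ∉ A ∧ nnAdj d e.1 e.2}

/-- `e` matches the unordered pair `{u, v}`. -/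
def um (e : V d × V d) (u v : V d) : Prop := (e.1 = u ∧ e.2 = v) ∨ (e.1 = v ∧ e.2 = u)

/-- `e` is an edge of the unit square with corner `p` spanned by directions `i, j`. -/
def sqEdge (p : V d) (i j : Fin d) (e : V d × V d) : Prop :=
  um e p (p + Ev d i) ∨ um e (p + Ev d j) (p + Ev d i + Ev d j) ∨
    um e p (p + Ev d j) ∨ um e (p + Ev d i) (p + Ev d i + Ev d j)

lemma um_swap {e : V d × V d} {u v : V d} (h : um e u v) : um (e.2, e.1) u v := by
  rcases h with ⟨h1, h2⟩ | ⟨h1, h2⟩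
  · exact Or.inr ⟨h2, h1⟩
  · exact Or.inl ⟨h2, h1⟩

lemma sqEdge_swap {p : V d} {i j : Fin d} {e : V d × V d} (h : sqEdge p i j e) :
    sqEdge p i j (e.2, e.1) := by
  rcases h with h | h | h | h
  · exact Or.inl (um_swap h)
  · exact Or.inr (Or.inl (um_swap h))
  · exact Or.inr (Or.inr (Or.inl (um_swap h)))
  · exact Or.inr (Or.inr (Or.inr (um_swap h)))

/-- two boundary edges lie in a common unit square. -/
def sqStep (e f : V d × V d) : Prop :=
  e ∈ Dset A ∧ f ∈ Dset A ∧ ∃ p i j, i ≠ j ∧ sqEdge p i j e ∧ sqEdge p i j f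

def reach (e₀ f : V d × V d) : Prop := Relation.ReflTransGen (sqStep A) e₀ f

open Classical in
/-- indicator of the class of boundary edges square-reachable from `e₀`. -/
noncomputable def phi (e₀ : V d × V d) (x y : V d) : ZMod 2 :=
  if ((x, y) ∈ Dset A ∧ reach A e₀ (x, y)) ∨ ((y, x) ∈ Dset A ∧ reach A e₀ (y, x)) then 1
  else 0

open Classical in
noncomputable def chi (x : V d) : ZMod 2 := if x ∈ A then 1 else 0

lemma phi_symm (e₀ : V d × V d) : ∀ x y : V d, phi A e₀ x y = phi A e₀ y x := by
  intro x y
  unfold phi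
  by_cases h : ((x, y) ∈ Dset A ∧ reach A e₀ (x, y)) ∨ ((y, x) ∈ Dset A ∧ reach A e₀ (y, x))
  · rw [if_pos h, if_pos (Or.symm h)]
  · rw [if_neg h, if_neg (fun hc => h (Or.symm hc))]

lemma phi_zero_inside {e₀ : V d × V d} {x y : V d} (hx : x ∈ A) (hy : y ∈ A) :
    phi A e₀ x y = 0 := by
  unfold phi
  rw [if_neg]
  rintro (⟨⟨_, h, _⟩, _⟩ | ⟨⟨_, h, _⟩, _⟩)
  · exact h hy
  · exact h hx

lemma phi_zero_outside {e₀ : V d × V d} {x y : V d} (hx : x ∉ A) (hy : y ∉ A) :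
    phi A e₀ x y = 0 := by
  unfold phi
  rw [if_neg]
  rintro (⟨⟨h, _, _⟩, _⟩ | ⟨⟨h, _, _⟩, _⟩)
  · exact hx h
  · exact hy h

lemma phi_one_of_reach {e₀ : V d × V d} {x y : V d} (hD : (x, y) ∈ Dset A)
    (hR : reach A e₀ (x, y)) : phi A e₀ x y = 1 := by
  unfold phi
  rw [if_pos (Or.inl ⟨hD, hR⟩)]

lemma phi_eq_chi {e₀ : V d × V d} {p : V d} {i j : Fin d} (hij : i ≠ j) {u v : V d}
    (hnn : nnAdj d u v) (hSq : sqEdge p i j (u, v))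
    (H : ∃ g ∈ Dset A, sqEdge p i j g ∧ reach A e₀ g) :
    phi A e₀ u v = chi A u + chi A v := by
  obtain ⟨g, hgD, hgSq, hgR⟩ := H
  by_cases hu : u ∈ A <;> by_cases hv : v ∈ A
  · rw [phi_zero_inside A hu hv, chi, chi, if_pos hu, if_pos hv]
    decide
  · have hD : (u, v) ∈ Dset A := ⟨hu, hv, hnn⟩
    have hR : reach A e₀ (u, v) := hgR.tail ⟨hgD, hD, p, i, j, hij, hgSq, hSq⟩
    rw [phi_one_of_reach A hD hR, chi, chi, if_pos hu, if_neg hv]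
    decide
  · have hD : (v, u) ∈ Dset A := ⟨hv, hu, nnAdj_symm hnn⟩
    have hR : reach A e₀ (v, u) := hgR.tail ⟨hgD, hD, p, i, j, hij, hgSq, sqEdge_swap hSq⟩
    have : phi A e₀ u v = 1 := by
      unfold phi
      rw [if_pos (Or.inr ⟨hD, hR⟩)]
    rw [this, chi, chi, if_neg hu, if_pos hv]
    decide
  · rw [phi_zero_outside A hu hv, chi, chi, if_neg hu, if_neg hv]
    decide

lemma phi_zero_of_not {e₀ : V d × V d} {p : V d} {i j : Fin d} {u v : V d}
    (hSq : sqEdge p i j (u, v))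
    (H : ¬ ∃ g ∈ Dset A, sqEdge p i j g ∧ reach A e₀ g) :
    phi A e₀ u v = 0 := by
  unfold phi
  rw [if_neg]
  rintro (⟨hD, hR⟩ | ⟨hD, hR⟩)
  · exact H ⟨(u, v), hD, hSq, hR⟩
  · exact H ⟨(v, u), hD, sqEdge_swap hSq, hR⟩

lemma nnAdj_self_add (x : V d) (i : Fin d) : nnAdj d x (x + Ev d i) :=
  nnAdj_symm (nnAdj_add_Ev d x i)

lemma phi_sq (e₀ : V d × V d) : ∀ (p : V d) (i j : Fin d),
    phi A e₀ p (p + Ev d i) + phi A e₀ (p + Ev d j) (p + Ev d i + Ev d j) =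
      phi A e₀ p (p + Ev d j) + phi A e₀ (p + Ev d i) (p + Ev d i + Ev d j) := by
  intro p i j
  by_cases hij : i = j
  · subst hij; rfl
  have hab : p + Ev d i + Ev d j = (p + Ev d j) + Ev d i := by abel
  have hn1 : nnAdj d p (p + Ev d i) := nnAdj_self_add p i
  have hn2 : nnAdj d (p + Ev d j) (p + Ev d i + Ev d j) := by
    rw [hab]; exact nnAdj_self_add _ i
  have hn3 : nnAdj d p (p + Ev d j) := nnAdj_self_add p j
  have hn4 : nnAdj d (p + Ev d i) (p + Ev d i + Ev d j) := nnAdj_self_add _ j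
  have hs1 : sqEdge p i j (p, p + Ev d i) := Or.inl (Or.inl ⟨rfl, rfl⟩)
  have hs2 : sqEdge p i j (p + Ev d j, p + Ev d i + Ev d j) :=
    Or.inr (Or.inl (Or.inl ⟨rfl, rfl⟩))
  have hs3 : sqEdge p i j (p, p + Ev d j) := Or.inr (Or.inr (Or.inl (Or.inl ⟨rfl, rfl⟩)))
  have hs4 : sqEdge p i j (p + Ev d i, p + Ev d i + Ev d j) :=
    Or.inr (Or.inr (Or.inr (Or.inl ⟨rfl, rfl⟩)))
  by_cases H : ∃ g ∈ Dset A, sqEdge p i j g ∧ reach A e₀ g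
  · rw [phi_eq_chi A hij hn1 hs1 H, phi_eq_chi A hij hn2 hs2 H, phi_eq_chi A hij hn3 hs3 H,
      phi_eq_chi A hij hn4 hs4 H]
    ring
  · rw [phi_zero_of_not A hs1 H, phi_zero_of_not A hs2 H, phi_zero_of_not A hs3 H,
      phi_zero_of_not A hs4 H]

lemma vert_bound {i j : Fin d} (hij : i ≠ j) (p v : V d)
    (hv : v = p ∨ v = p + Ev d i ∨ v = p + Ev d j ∨ v = p + Ev d i + Ev d j) (k : Fin d) :
    0 ≤ v k - p k ∧ v k - p k ≤ 1 := by
  have hik : ¬(i = k ∧ j = k) := by rintro ⟨h1, h2⟩; exact hij (h1.trans h2.symm)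
  rcases hv with rfl | rfl | rfl | rfl
  · omega
  · have : (p + Ev d i) k = p k + Ev d i k := rfl
    rw [this, Ev_apply]
    split <;> omega
  · have : (p + Ev d j) k = p k + Ev d j k := rfl
    rw [this, Ev_apply]
    split <;> omega
  · have : (p + Ev d i + Ev d j) k = p k + Ev d i k + Ev d j k := rfl
    rw [this, Ev_apply, Ev_apply]
    by_cases h1 : i = k <;> by_cases h2 : j = k
    · exact absurd ⟨h1, h2⟩ hik
    · rw [if_pos h1, if_neg h2]; omega
    · rw [if_neg h1, if_pos h2]; omega
    · rw [if_neg h1, if_neg h2]; omega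

lemma sqEdge_fst {p : V d} {i j : Fin d} {e : V d × V d} (he : sqEdge p i j e) :
    e.1 = p ∨ e.1 = p + Ev d i ∨ e.1 = p + Ev d j ∨ e.1 = p + Ev d i + Ev d j := by
  rcases he with (⟨h, _⟩ | ⟨h, _⟩) | (⟨h, _⟩ | ⟨h, _⟩) | (⟨h, _⟩ | ⟨h, _⟩) | (⟨h, _⟩ | ⟨h, _⟩) <;>
    tauto

lemma reach_to_star (e₀ : V d × V d) {f : V d × V d} (hr : reach A e₀ f) :
    Relation.ReflTransGen
      (fun p q => starAdj d p q ∧ p ∈ innerBd d A ∧ q ∈ innerBd d A) e₀.1 f.1 := by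
  induction hr with
  | refl => exact Relation.ReflTransGen.refl
  | @tail g f' h1 h2 ih =>
    obtain ⟨hgD, hfD, p, i, j, hij, hgSq, hfSq⟩ := h2
    have hg1 : g.1 ∈ innerBd d A := ⟨hgD.1, g.2, hgD.2.1, hgD.2.2⟩
    have hf1 : f'.1 ∈ innerBd d A := ⟨hfD.1, f'.2, hfD.2.1, hfD.2.2⟩
    by_cases heq : g.1 = f'.1
    · rw [← heq]
      exact ih
    · refine ih.tail ⟨⟨heq, ?_⟩, hg1, hf1⟩
      intro k
      have hbg := vert_bound hij p g.1 (sqEdge_fst hgSq) k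
      have hbf := vert_bound hij p f'.1 (sqEdge_fst hfSq) k
      omega

end Concrete

theorem statement8' (d : ℕ) (A : Set (V d))
    (hconnA : connIn d A (nnAdj d)) (hconnC : connIn d Aᶜ (nnAdj d)) :
    ∀ y₁ ∈ innerBd d A, ∀ y₂ ∈ innerBd d A,
      Relation.ReflTransGen
        (fun p q => starAdj d p q ∧ p ∈ innerBd d A ∧ q ∈ innerBd d A) y₁ y₂ := by
  intro y₁ hy₁ y₂ hy₂
  obtain ⟨hy₁A, z₁, hz₁, hnn₁⟩ := hy₁
  obtain ⟨hy₂A, z₂, hz₂, hnn₂⟩ := hy₂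
  set e₀ : V d × V d := (y₁, z₁) with he₀def
  have he₀ : e₀ ∈ Dset A := ⟨hy₁A, hz₁, hnn₁⟩
  have he₂D : ((y₂, z₂) : V d × V d) ∈ Dset A := ⟨hy₂A, hz₂, hnn₂⟩
  have hsym := phi_symm A e₀
  have hsq := phi_sq A e₀
  have hA0 : ∀ p q : V d, p ∈ A → q ∈ A → nnAdj d p q → phi A e₀ p q = 0 :=
    fun p q hp hq _ => phi_zero_inside A hp hq
  have hC0 : ∀ p q : V d, p ∈ Aᶜ → q ∈ Aᶜ → nnAdj d p q → phi A e₀ p q = 0 :=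
    fun p q hp hq _ => phi_zero_outside A hp hq
  have hpy : pot (phi A e₀) y₁ = pot (phi A e₀) y₂ :=
    pot_const (phi A e₀) hsq hsym hA0 (hconnA y₁ hy₁A y₂ hy₂A)
  have hpz : pot (phi A e₀) z₁ = pot (phi A e₀) z₂ :=
    pot_const (phi A e₀) hsq hsym hC0 (hconnC z₁ hz₁ z₂ hz₂)
  have h1 : pot (phi A e₀) y₁ + pot (phi A e₀) z₁ = 1 := by
    rw [pot_nn (phi A e₀) hsq hsym hnn₁]
    exact phi_one_of_reach A he₀ Relation.ReflTransGen.refl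
  have h2' : pot (phi A e₀) y₂ + pot (phi A e₀) z₂ = phi A e₀ y₂ z₂ :=
    pot_nn (phi A e₀) hsq hsym hnn₂
  have hphi2 : phi A e₀ y₂ z₂ = 1 := by
    rw [← h2', ← hpy, ← hpz]
    exact h1
  have hreach : reach A e₀ (y₂, z₂) := by
    by_cases hc : (((y₂, z₂) : V d × V d) ∈ Dset A ∧ reach A e₀ (y₂, z₂)) ∨
        (((z₂, y₂) : V d × V d) ∈ Dset A ∧ reach A e₀ (z₂, y₂))
    · rcases hc with ⟨_, hr⟩ | ⟨hD, _⟩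
      · exact hr
      · exact absurd hD.1 hz₂
    · rw [phi, if_neg hc] at hphi2
      exact absurd hphi2 (by decide)
  exact reach_to_star A e₀ hreach


/-- if `A ⊂ ℤ^d` (`d ≥ 3`) is finite and connected with connected
complement, then the internal boundary `∂A` is connected in the *-graph: any two
boundary points are joined by a sequence of boundary points with consecutive l^∞
distance 1. -/
theorem statement8 (d : ℕ) (hd : 3 ≤ d) (A : Set (V d)) (hfin : A.Finite)
    (hconnA : connIn d A (nnAdj d)) (hconnC : connIn d Aᶜ (nnAdj d)) :
    ∀ y₁ ∈ innerBd d A, ∀ y₂ ∈ innerBd d A,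
      Relation.ReflTransGen
        (fun p q => starAdj d p q ∧ p ∈ innerBd d A ∧ q ∈ innerBd d A) y₁ y₂ := by
  exact statement8' d A hconnA hconnC

end Paper
end

section
/- Let d ≥ 3 and 0 < a < 0.3, n = ⌊bT^{1/2}⌋ for a fixed constant b > 0. For the geometrically killed capacity cap^{(T)}(K) = Σ_{x∈K} P_x^{(T)}(H̄_K = ∞), where P_x^{(T)} is the law of a geometrically killed simple random walk with killing rate 1/(T+1), there exists c(u,d) > 0 such that cap^{(T)}(B(0, n^a)) ≤ c·n^{a(d−2)}. -/
open scoped BigOperators ENNReal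
open MeasureTheory

namespace Paper

/-- positions of the walk from `x` with `n` prescribed steps `σ`. -/
def pathOf (d n : ℕ) (x : V d) (σ : Fin n → Fin d × Bool) : ℕ → V d :=
  fun k => x + ∑ i : Fin n, if (i : ℕ) < k then stepVec d (σ i) else 0

/-- a finite path: starting point together with a finite sequence of unit steps. -/
structure PathData (d : ℕ) where
  start : V d
  len : ℕ
  steps : Fin len → Fin d × Bool

/-- position of the path `η` at time `k` (frozen after time `η.len`). -/
def pos (d : ℕ) (η : PathData d) (k : ℕ) : V d :=
  pathOf d η.len η.start η.steps k

/-- probability that the geometrically killed walk started at `η.start`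
(killing rate `1/(T+1)`) realizes exactly the path `η`. -/
noncomputable def kWeight (d : ℕ) (T : ℝ) (η : PathData d) : ℝ :=
  (T / (T + 1)) ^ η.len * (1 / (T + 1)) * (1 / (2 * (d : ℝ))) ^ η.len

/-- `P` is (the law of) the finitary random interlacements point process `FI^{u,T}`:
for each site `x` a `Poisson(2du/(T+1))` number of independent geometrically killed
random walks start at `x`; equivalently the multiplicity of each finite path `η` is
Poisson with intensity `(2du/(T+1)) ⋅ kWeight η`, independently over paths. -/
def IsFRI (d : ℕ) (u T : ℝ) (P : Measure ((PathData d) → ℕ)) : Prop :=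
  IsProbabilityMeasure P ∧
  (∀ η : PathData d,
      P.map (fun conf => conf η) =
        (ProbabilityTheory.poissonPMF
          (Real.toNNReal (2 * d * u / (T + 1) * kWeight d T η))).toMeasure) ∧
  ProbabilityTheory.iIndepFun
    (fun η conf => conf η) P

/-- an edge `{v,w}` is open in the configuration `conf` if some present trajectory
traverses it. -/
def edgeOpen (d : ℕ) (conf : PathData d → ℕ) (v w : V d) : Prop :=
  ∃ η : PathData d, conf η ≠ 0 ∧ ∃ k : ℕ, k + 1 ≤ η.len ∧
    ((pos d η k = v ∧ pos d η (k + 1) = w) ∨ (pos d η k = w ∧ pos d η (k + 1) = v))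

open Classical in
/-- escape probability `P_x^{(T)}(H̄_A = ∞)` for the geometrically killed walk:
the total weight of killed paths started at `x` which never return to `A`. -/
noncomputable def escProbT (d : ℕ) (T : ℝ) (A : Set (V d)) (x : V d) : ℝ :=
  ∑' η : PathData d,
    if η.start = x ∧ ∀ k, 1 ≤ k → k ≤ η.len → pos d η k ∉ A then kWeight d T η else 0

/-- killed capacity `cap^{(T)}(A) = Σ_{x∈A} P_x^{(T)}(H̄_A = ∞)`. -/
noncomputable def capT (d : ℕ) (T : ℝ) (A : Set (V d)) : ℝ :=
  ∑' x : A, escProbT d T A x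

section Basic
variable {d : ℕ}

lemma stepVec_apply (s : Fin d × Bool) (i : Fin d) :
    stepVec d s i = if s.1 = i then (if s.2 then 1 else -1) else 0 := by
  rcases s with ⟨j, b⟩
  cases b <;> simp [stepVec, Pi.single_apply, eq_comm]

/-- total displacement of a finite list of steps -/
def disp (d k : ℕ) (σ : Fin k → Fin d × Bool) : V d := ∑ j, stepVec d (σ j)

lemma pathOf_self (k : ℕ) (y : V d) (σ : Fin k → Fin d × Bool) :
    pathOf d k y σ k = y + disp d k σ := by
  unfold pathOf disp
  congr 1
  exact Finset.sum_congr rfl fun i _ => by simp [i.isLt]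

lemma pathOf_append_left (k n : ℕ) (y : V d) (σ : Fin k → Fin d × Bool)
    (τ : Fin n → Fin d × Bool) (t : ℕ) (ht : t ≤ k) :
    pathOf d (k + n) y (Fin.append σ τ) t = pathOf d k y σ t := by
  unfold pathOf
  congr 1
  rw [Fin.sum_univ_add]
  have h2 : ∀ i : Fin n, (if ((Fin.natAdd k i : Fin (k+n)) : ℕ) < t
      then stepVec d (Fin.append σ τ (Fin.natAdd k i)) else 0) = 0 := by
    intro i
    have : ¬ (k + (i:ℕ) < t) := by omega
    simp [this]
  rw [Finset.sum_congr rfl fun i _ => h2 i]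
  simp [Fin.append_left]

lemma pathOf_append_right (k n : ℕ) (y : V d) (σ : Fin k → Fin d × Bool)
    (τ : Fin n → Fin d × Bool) (j : ℕ) :
    pathOf d (k + n) y (Fin.append σ τ) (k + j)
      = pathOf d n (pathOf d k y σ k) τ j := by
  rw [pathOf_self]
  unfold pathOf
  rw [Fin.sum_univ_add]
  have h1 : ∀ i : Fin k, (if ((Fin.castAdd n i : Fin (k+n)) : ℕ) < k + j
      then stepVec d (Fin.append σ τ (Fin.castAdd n i)) else 0) = stepVec d (σ i) := by
    intro i
    have hlt : ((Fin.castAdd n i : Fin (k+n)) : ℕ) < k + j := by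
      simp only [Fin.coe_castAdd]; omega
    rw [if_pos hlt, Fin.append_left]
  rw [Finset.sum_congr rfl fun i _ => h1 i]
  have h2 : ∀ i : Fin n, (if ((Fin.natAdd k i : Fin (k+n)) : ℕ) < k + j
      then stepVec d (Fin.append σ τ (Fin.natAdd k i)) else 0)
      = (if (i : ℕ) < j then stepVec d (τ i) else 0) := by
    intro i
    simp only [Fin.coe_natAdd, Fin.append_right]
    by_cases h : (i:ℕ) < j
    · rw [if_pos (show k + (i:ℕ) < k + j by omega), if_pos h]
    · rw [if_neg (show ¬ (k + (i:ℕ) < k + j) by omega), if_neg h]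
  rw [Finset.sum_congr rfl fun i _ => h2 i]
  unfold disp
  abel

end Basic

section Count
variable {d : ℕ}

lemma disp_apply (k : ℕ) (σ : Fin k → Fin d × Bool) (i : Fin d) :
    disp d k σ i = ∑ j, stepVec d (σ j) i := by
  simp [disp]

lemma card_steps (k : ℕ) : Fintype.card (Fin k → Fin d × Bool) = (2*d)^k := by
  simp [Fintype.card_fun, mul_comm]

lemma step_sum (i : Fin d) : ∑ e : Fin d × Bool, stepVec d e i = 0 := by
  rw [Fintype.sum_prod_type]
  refine Finset.sum_eq_zero fun j _ => ?_
  simp [stepVec_apply]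

lemma step_sq_sum (i : Fin d) : ∑ e : Fin d × Bool, (stepVec d e i)^2 = 2 := by
  rw [Fintype.sum_prod_type]
  have : ∀ j : Fin d, ∑ b : Bool, (stepVec d (j, b) i)^2 = if j = i then 2 else 0 := by
    intro j
    by_cases h : j = i <;> simp [stepVec_apply, h]
  rw [Finset.sum_congr rfl fun j _ => this j]
  simp

lemma disp_cons (k : ℕ) (e : Fin d × Bool) (σ : Fin k → Fin d × Bool) (i : Fin d) :
    disp d (k+1) (Fin.cons e σ) i = stepVec d e i + disp d k σ i := by
  simp [disp_apply, Fin.sum_univ_succ]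

lemma sum_cons_equiv {M : Type*} [AddCommMonoid M] (k : ℕ)
    (F : (Fin (k+1) → Fin d × Bool) → M) :
    ∑ τ : Fin (k+1) → Fin d × Bool, F τ
      = ∑ e : Fin d × Bool, ∑ σ : Fin k → Fin d × Bool, F (Fin.cons e σ) := by
  rw [← Equiv.sum_comp (Fin.consEquiv fun _ => Fin d × Bool) F, Fintype.sum_prod_type]
  rfl

lemma second_moment (i : Fin d) : ∀ k : ℕ,
    (d:ℤ) * ∑ σ : Fin k → Fin d × Bool, (disp d k σ i)^2 = k * (2*d)^k := by
  intro k
  induction k with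
  | zero => simp [disp]
  | succ k ih =>
    rw [sum_cons_equiv]
    have hexp : ∀ e : Fin d × Bool, ∀ σ : Fin k → Fin d × Bool,
        (disp d (k+1) (Fin.cons e σ) i)^2
          = (stepVec d e i)^2 + 2 * (stepVec d e i) * (disp d k σ i) + (disp d k σ i)^2 := by
      intro e σ; rw [disp_cons]; ring
    calc (d:ℤ) * ∑ e : Fin d × Bool, ∑ σ : Fin k → Fin d × Bool, (disp d (k+1) (Fin.cons e σ) i)^2
        = (d:ℤ) * ∑ e : Fin d × Bool, ((stepVec d e i)^2 * (2*d)^k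
            + 2 * (stepVec d e i) * (∑ σ : Fin k → Fin d × Bool, disp d k σ i)
            + ∑ σ : Fin k → Fin d × Bool, (disp d k σ i)^2) := by
          congr 1
          refine Finset.sum_congr rfl fun e _ => ?_
          rw [Finset.sum_congr rfl fun σ _ => hexp e σ]
          rw [Finset.sum_add_distrib, Finset.sum_add_distrib, Finset.sum_const,
            ← Finset.mul_sum]
          simp [card_steps, mul_comm]
      _ = (k+1 : ℕ) * (2*d)^(k+1) := by
          rw [Finset.sum_add_distrib, Finset.sum_add_distrib]
          rw [← Finset.sum_mul, step_sq_sum]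
          have hz : ∑ e : Fin d × Bool, 2 * (stepVec d e i)
              * (∑ σ : Fin k → Fin d × Bool, disp d k σ i) = 0 := by
            rw [← Finset.sum_mul, ← Finset.mul_sum, step_sum]
            ring
          rw [hz, Finset.sum_const, mul_add, mul_add]
          simp only [Fintype.card_fun, Fintype.card_prod, Fintype.card_fin, Fintype.card_bool,
            smul_eq_mul, nsmul_eq_mul]
          simp only [Finset.card_univ, Fintype.card_fun, Fintype.card_prod,
            Fintype.card_fin, Fintype.card_bool]
          push_cast
          linear_combination 2 * (d:ℤ) * ih

end Count

section Count2
variable {d : ℕ}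

def flip (F : Fin d → Bool) {k : ℕ} (σ : Fin k → Fin d × Bool) :
    Fin k → Fin d × Bool := fun j => ((σ j).1, xor (F (σ j).1) (σ j).2)

lemma flip_flip (F : Fin d → Bool) {k : ℕ} (σ : Fin k → Fin d × Bool) :
    flip F (flip F σ) = σ := by
  funext j
  simp only [flip]
  cases h : (σ j) with
  | mk i b => simp [Bool.xor_assoc]

lemma flip_inj (F : Fin d → Bool) {k : ℕ} :
    Function.Injective (flip (d := d) F (k := k)) := by
  intro σ σ' h
  rw [← flip_flip F σ, h, flip_flip]

lemma disp_flip (F : Fin d → Bool) {k : ℕ} (σ : Fin k → Fin d × Bool) (i : Fin d) :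
    disp d k (flip F σ) i = (if F i then -1 else 1) * disp d k σ i := by
  rw [disp_apply, disp_apply, Finset.mul_sum]
  refine Finset.sum_congr rfl fun j _ => ?_
  rcases hsj : σ j with ⟨m, b⟩
  simp only [flip, hsj]
  by_cases hmi : m = i
  · subst hmi
    cases hF : F m <;> cases b <;> simp [stepVec_apply]
  · simp [stepVec_apply, hmi]

lemma good_card (k : ℕ) :
    ((2*d)^k : ℕ) ≤ 2^d *
      (Finset.univ.filter (fun σ : Fin k → Fin d × Bool => ∀ i, 0 ≤ disp d k σ i)).card := by
  classical
  have h := Finset.card_le_card_of_injOn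
    (f := fun σ : Fin k → Fin d × Bool =>
      (flip (fun i => decide (disp d k σ i < 0)) σ, fun i => decide (disp d k σ i < 0)))
    (s := Finset.univ)
    (t := (Finset.univ.filter (fun σ : Fin k → Fin d × Bool => ∀ i, 0 ≤ disp d k σ i)) ×ˢ
      (Finset.univ : Finset (Fin d → Bool)))
    (by
      intro σ _
      simp only [Finset.mem_coe, Finset.mem_product, Finset.mem_filter, Finset.mem_univ, true_and, and_true]
      intro i
      rw [disp_flip]
      by_cases h : disp d k σ i < 0
      · simp [h]; omega
      · simp [h]; omega)
    (by
      intro σ _ σ' _ hs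
      simp only [Prod.mk.injEq] at hs
      have hF : (fun i => decide (disp d k σ i < 0)) = fun i => decide (disp d k σ' i < 0) :=
        hs.2
      have := hs.1
      rw [hF] at this
      exact flip_inj _ this)
  calc ((2*d)^k : ℕ) = Finset.univ.card := by
        rw [Finset.card_univ, card_steps]
    _ ≤ _ := h
    _ ≤ 2^d * (Finset.univ.filter
        (fun σ : Fin k → Fin d × Bool => ∀ i, 0 ≤ disp d k σ i)).card := by
        rw [Finset.card_product]
        simp [Fintype.card_fun, mul_comm]

end Count2
section Count3
variable {d : ℕ}

lemma cheb (i : Fin d) (k : ℕ) (r : ℝ) (hr : 0 < r) :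
    (d : ℝ) * ((Finset.univ.filter
        (fun σ : Fin k → Fin d × Bool => r < |((disp d k σ i : ℤ) : ℝ)|)).card) * r^2
      ≤ (k : ℝ) * (2*d)^k := by
  classical
  have h1 : ((Finset.univ.filter
      (fun σ : Fin k → Fin d × Bool => r < |((disp d k σ i : ℤ) : ℝ)|)).card : ℝ) * r^2
      ≤ ∑ σ : Fin k → Fin d × Bool, ((disp d k σ i : ℤ) : ℝ)^2 := by
    have h2 := Finset.sum_le_sum_of_subset_of_nonneg
      (Finset.filter_subset (fun σ : Fin k → Fin d × Bool => r < |((disp d k σ i : ℤ) : ℝ)|)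
        Finset.univ)
      (fun σ _ _ => sq_nonneg ((disp d k σ i : ℤ) : ℝ))
    refine le_trans ?_ h2
    rw [← nsmul_eq_mul]
    refine Finset.card_nsmul_le_sum _ _ _ fun σ hσ => ?_
    rw [Finset.mem_filter] at hσ
    have := hσ.2
    nlinarith [this, abs_nonneg ((disp d k σ i : ℤ) : ℝ), sq_abs ((disp d k σ i : ℤ) : ℝ)]
  have h3 : (d : ℝ) * ∑ σ : Fin k → Fin d × Bool, ((disp d k σ i : ℤ) : ℝ)^2
      = (k : ℝ) * (2*d)^k := by
    have := second_moment i k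
    have := congrArg (fun z : ℤ => (z : ℝ)) this
    push_cast at this ⊢
    convert this using 2
  nlinarith [h1, Nat.cast_nonneg (α := ℝ) d]

lemma goodbox (k : ℕ) (r : ℝ) (hr : 0 < r) (hd : 0 < d) (hk : (k:ℝ) ≤ r^2 / 2^(d+1)) :
    ((2*d : ℝ))^k ≤ 2^(d+1) * ((Finset.univ.filter
      (fun σ : Fin k → Fin d × Bool =>
        ∀ i, 0 ≤ disp d k σ i ∧ ((disp d k σ i : ℤ) : ℝ) ≤ r)).card) := by
  classical
  set Good := Finset.univ.filter (fun σ : Fin k → Fin d × Bool => ∀ i, 0 ≤ disp d k σ i)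
  set GB := Finset.univ.filter (fun σ : Fin k → Fin d × Bool =>
    ∀ i, 0 ≤ disp d k σ i ∧ ((disp d k σ i : ℤ) : ℝ) ≤ r)
  set Bad := fun i : Fin d => Finset.univ.filter
    (fun σ : Fin k → Fin d × Bool => r < |((disp d k σ i : ℤ) : ℝ)|)
  have hsub : Good ⊆ GB ∪ Finset.univ.biUnion Bad := by
    intro σ hσ
    rw [Finset.mem_union]
    by_cases h : σ ∈ GB
    · exact Or.inl h
    · refine Or.inr ?_
      rw [Finset.mem_biUnion]
      simp only [GB, Good, Finset.mem_filter, Finset.mem_univ, true_and, not_forall] at h hσ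
      obtain ⟨i, hi⟩ := h
      refine ⟨i, Finset.mem_univ i, ?_⟩
      simp only [Bad, Finset.mem_filter, Finset.mem_univ, true_and]
      have h0 := hσ i
      have : ¬ ((disp d k σ i : ℤ) : ℝ) ≤ r := by
        intro hle; exact hi ⟨h0, hle⟩
      rw [abs_of_nonneg (by exact_mod_cast h0)]
      linarith
  have hcard : (Good.card : ℝ) ≤ GB.card + ∑ i : Fin d, ((Bad i).card : ℝ) := by
    have := Finset.card_le_card hsub
    have h2 := Finset.card_union_le GB (Finset.univ.biUnion Bad)
    have h3 := Finset.card_biUnion_le (s := (Finset.univ : Finset (Fin d))) (t := Bad)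
    have : Good.card ≤ GB.card + ∑ i : Fin d, (Bad i).card := by omega
    exact_mod_cast this
  have hbad : ∀ i : Fin d, ((Bad i).card : ℝ) ≤ (k : ℝ) * (2*d)^k / ((d:ℝ) * r^2) := by
    intro i
    have := cheb i k r hr
    have hdr : (0:ℝ) < (d:ℝ) * r^2 := by positivity
    rw [le_div_iff₀ hdr]
    nlinarith [this]
  have hsumbad : ∑ i : Fin d, ((Bad i).card : ℝ) ≤ (k : ℝ) * (2*d)^k / r^2 := by
    calc ∑ i : Fin d, ((Bad i).card : ℝ) ≤ ∑ _i : Fin d, (k : ℝ) * (2*d)^k / ((d:ℝ) * r^2) :=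
          Finset.sum_le_sum fun i _ => hbad i
      _ = (k : ℝ) * (2*d)^k / r^2 := by
          rw [Finset.sum_const, Finset.card_univ, Fintype.card_fin, nsmul_eq_mul]
          field_simp
  have hgood : ((2*d:ℝ))^k ≤ 2^d * (Good.card : ℝ) := by
    have := good_card (d := d) k
    exact_mod_cast this
  have hkk : (k : ℝ) * (2*d)^k / r^2 ≤ ((2*d:ℝ))^k / 2^(d+1) := by
    rw [div_le_div_iff₀ (by positivity) (by positivity)]
    have hpow : (0:ℝ) ≤ (2*d:ℝ)^k := by positivity
    have := mul_le_mul_of_nonneg_right (le_div_iff₀ (by positivity : (0:ℝ) < 2^(d+1)) |>.mp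
      (by linarith [hk] : (k:ℝ) ≤ r^2 / 2^(d+1))) hpow
    nlinarith [this]
  have h2d1 : (2:ℝ)^(d+1) = 2 * 2^d := by ring
  have hP2 : (2:ℝ)^d * ((2*d:ℝ)^k / 2^(d+1)) = (2*d:ℝ)^k / 2 := by
    rw [h2d1]
    have : (2:ℝ)^d ≠ 0 := by positivity
    field_simp
  have hc2 : (2:ℝ)^d * (Good.card : ℝ) ≤ 2^d * (GB.card : ℝ) + (2*d:ℝ)^k / 2 := by
    rw [← hP2]
    have h6 : (Good.card : ℝ) ≤ (GB.card : ℝ) + (2*d:ℝ)^k / 2^(d+1) := by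
      linarith [hcard, hsumbad, hkk]
    nlinarith [h6, pow_pos (by norm_num : (0:ℝ) < 2) d]
  have := hgood.trans hc2
  rw [h2d1]
  linarith

end Count3
section Count4
variable {d : ℕ}

open Classical in
lemma count_main (hd : 0 < d) (r : ℝ) (hr : 1 ≤ r) (x : V d) (hx : x ∈ ball d 0 r)
    (k : ℕ) (hk : (k:ℝ) ≤ r^2 / 2^(d+1)) :
    ((2*d : ℝ))^k ≤ 2^(d+1) * ((Finset.univ.filter
      (fun σ : Fin k → Fin d × Bool => x + disp d k σ ∈ ball d 0 r)).card) := by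
  classical
  refine le_trans (goodbox k r (by linarith) hd hk) ?_
  have hle : ((Finset.univ.filter (fun σ : Fin k → Fin d × Bool =>
      ∀ i, 0 ≤ disp d k σ i ∧ ((disp d k σ i : ℤ) : ℝ) ≤ r)).card : ℝ)
      ≤ ((Finset.univ.filter
      (fun σ : Fin k → Fin d × Bool => x + disp d k σ ∈ ball d 0 r)).card : ℝ) := by
    have := Finset.card_le_card_of_injOn
      (f := flip (fun i => decide (0 ≤ x i)))
      (s := Finset.univ.filter (fun σ : Fin k → Fin d × Bool =>
        ∀ i, 0 ≤ disp d k σ i ∧ ((disp d k σ i : ℤ) : ℝ) ≤ r))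
      (t := Finset.univ.filter
        (fun σ : Fin k → Fin d × Bool => x + disp d k σ ∈ ball d 0 r))
      (by
        intro σ hσ
        rw [Finset.mem_coe, Finset.mem_filter] at hσ ⊢
        refine ⟨Finset.mem_univ _, ?_⟩
        intro i
        have hxi := hx i
        simp only [Pi.zero_apply, sub_zero] at hxi ⊢
        have hdf := disp_flip (fun i => decide (0 ≤ x i)) σ i
        have h0 := (hσ.2 i).1
        have h1 := (hσ.2 i).2
        have h0' : (0:ℝ) ≤ ((disp d k σ i : ℤ) : ℝ) := by exact_mod_cast h0
        rw [Pi.add_apply, hdf]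
        by_cases hxs : 0 ≤ x i
        · rw [if_pos (by simpa using hxs)]
          push_cast
          have hxr : ((x i : ℤ) : ℝ) ≤ r := by
            rw [abs_of_nonneg (by exact_mod_cast hxs)] at hxi; exact hxi
          have hx0 : (0:ℝ) ≤ ((x i : ℤ) : ℝ) := by exact_mod_cast hxs
          rw [abs_le]
          constructor <;> linarith
        · rw [if_neg (by simpa using hxs)]
          push_cast
          have hxs' : ((x i : ℤ) : ℝ) < 0 := by exact_mod_cast not_le.mp hxs
          have hxr : -r ≤ ((x i : ℤ) : ℝ) := by
            rw [abs_of_nonpos (by exact_mod_cast le_of_lt (not_le.mp hxs))] at hxi; linarith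
          rw [abs_le]
          constructor <;> linarith)
      (fun σ _ σ' _ h => flip_inj _ h)
    exact_mod_cast this
  have hp : (0:ℝ) < 2^(d+1) := by positivity
  nlinarith [hle, hp]

open Classical in
lemma count_neg (x : V d) (k : ℕ) (A : Set (V d)) :
    (Finset.univ.filter (fun σ : Fin k → Fin d × Bool => x - disp d k σ ∈ A)).card
      = (Finset.univ.filter (fun σ : Fin k → Fin d × Bool => x + disp d k σ ∈ A)).card := by
  classical
  have hneg : ∀ σ : Fin k → Fin d × Bool, disp d k (flip (fun _ => true) σ) = - disp d k σ := by
    intro σ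
    funext i
    rw [Pi.neg_apply, disp_flip]
    simp
  refine Finset.card_bij' (fun σ _ => flip (fun _ => true) σ) (fun σ _ => flip (fun _ => true) σ)
    ?_ ?_ (fun σ _ => flip_flip _ σ) (fun σ _ => flip_flip _ σ)
  · intro σ hσ
    rw [Finset.mem_filter] at hσ ⊢
    refine ⟨Finset.mem_univ _, ?_⟩
    rw [hneg σ, ← sub_eq_add_neg]
    exact hσ.2
  · intro σ hσ
    rw [Finset.mem_filter] at hσ ⊢
    refine ⟨Finset.mem_univ _, ?_⟩
    rw [hneg σ, sub_neg_eq_add]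
    exact hσ.2

end Count4


section Master
variable {d : ℕ} {T : ℝ}

/-- weight of a path of length `n` -/
noncomputable def wlen (d : ℕ) (T : ℝ) (n : ℕ) : ℝ :=
  (T / (T + 1)) ^ n * (1 / (T + 1)) * (1 / (2 * (d : ℝ))) ^ n

lemma kWeight_eq (η : PathData d) : kWeight d T η = wlen d T η.len := rfl

lemma wlen_nonneg (hT : 0 < T) (n : ℕ) : 0 ≤ wlen d T n := by
  unfold wlen
  positivity

lemma kWeight_nonneg (hT : 0 < T) (η : PathData d) : 0 ≤ kWeight d T η :=
  wlen_nonneg hT η.len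

lemma q_lt_one (hT : 0 < T) : T / (T + 1) < 1 := by
  rw [div_lt_one (by linarith)]; linarith

lemma q_nonneg (hT : 0 < T) : 0 ≤ T / (T + 1) := by positivity

lemma wlen_add (n m : ℕ) :
    wlen d T (n + m) = ((T / (T + 1)) ^ n * (1 / (2 * (d : ℝ))) ^ n) * wlen d T m := by
  unfold wlen
  ring

lemma sum_fiber (hd : 0 < d) (n : ℕ) :
    ∑' _σ : Fin n → Fin d × Bool, wlen d T n = (T / (T + 1)) ^ n * (1 / (T + 1)) := by
  rw [tsum_fintype, Finset.sum_const, Finset.card_univ, card_steps, nsmul_eq_mul]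
  unfold wlen
  have h2d : ((2 * d : ℕ) : ℝ) ≠ 0 := by
    have : 0 < 2 * d := by omega
    exact_mod_cast this.ne'
  push_cast
  have h1 : (2*(d:ℝ)) ≠ 0 := by
    have : (0:ℝ) < 2 * d := by
      have : (0:ℝ) < (d:ℝ) := by exact_mod_cast hd
      linarith
    linarith
  have key : ((2:ℝ)*(d:ℝ))^n * (1/(2*(d:ℝ)))^n = 1 := by
    rw [← mul_pow, mul_one_div_cancel h1, one_pow]
  linear_combination ((T/(T+1))^n * (1/(T+1))) * key

lemma summable_inner (hT : 0 < T) (hd : 0 < d) :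
    Summable (fun p : Σ n : ℕ, (Fin n → Fin d × Bool) => wlen d T p.1) := by
  rw [summable_sigma_of_nonneg (fun p => wlen_nonneg hT p.1)]
  refine ⟨fun n => Summable.of_finite, ?_⟩
  have hcong : (fun n : ℕ => ∑' _σ : Fin n → Fin d × Bool, wlen d T n)
      = fun n : ℕ => (T / (T + 1)) ^ n * (1 / (T + 1)) := by
    funext n; exact sum_fiber hd n
  rw [hcong]
  exact (summable_geometric_of_lt_one (q_nonneg hT) (q_lt_one hT)).mul_right _

lemma tsum_inner (hT : 0 < T) (hd : 0 < d) :
    ∑' p : Σ n : ℕ, (Fin n → Fin d × Bool), wlen d T p.1 = 1 := by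
  rw [Summable.tsum_sigma (summable_inner hT hd)]
  have hcong : ∀ n : ℕ, ∑' _σ : Fin n → Fin d × Bool, wlen d T n
      = (T / (T + 1)) ^ n * (1 / (T + 1)) := fun n => sum_fiber hd n
  rw [tsum_congr hcong, tsum_mul_right, tsum_geometric_of_lt_one (q_nonneg hT) (q_lt_one hT)]
  have h1 : 1 - T / (T + 1) = 1 / (T + 1) := by
    field_simp
    ring
  rw [h1]
  field_simp

/-- the equivalence between `PathData` and the sigma type -/
def pathEquiv (d : ℕ) : (Σ y : V d, Σ n : ℕ, (Fin n → Fin d × Bool)) ≃ PathData d where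
  toFun p := ⟨p.1, p.2.1, p.2.2⟩
  invFun η := ⟨η.start, η.len, η.steps⟩
  left_inv p := rfl
  right_inv η := rfl

lemma summable_master (hT : 0 < T) (hd : 0 < d) (y : V d) :
    Summable (fun ρ : PathData d => if ρ.start = y then kWeight d T ρ else 0) := by
  classical
  rw [← (pathEquiv d).summable_iff]
  have hG : ((fun ρ : PathData d => if ρ.start = y then kWeight d T ρ else 0) ∘ (pathEquiv d))
      = fun p : Σ y : V d, Σ n : ℕ, (Fin n → Fin d × Bool) =>
        if p.1 = y then wlen d T p.2.1 else 0 := rfl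
  rw [hG]
  rw [summable_sigma_of_nonneg (fun p => by
    by_cases h : p.1 = y <;> simp [h, wlen_nonneg hT])]
  constructor
  · intro y'
    by_cases h : y' = y
    · simpa [h] using summable_inner hT hd
    · simp [h]
  · apply summable_of_ne_finset_zero (s := {y})
    intro y' hy'
    have h : y' ≠ y := by simpa using hy'
    simp [h]

lemma tsum_master (hT : 0 < T) (hd : 0 < d) (y : V d) :
    ∑' ρ : PathData d, (if ρ.start = y then kWeight d T ρ else 0) = 1 := by
  classical
  rw [← (pathEquiv d).tsum_eq]
  have hG : ∀ p : Σ y : V d, Σ n : ℕ, (Fin n → Fin d × Bool),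
      (if ((pathEquiv d) p).start = y then kWeight d T ((pathEquiv d) p) else 0)
      = if p.1 = y then wlen d T p.2.1 else 0 := fun p => rfl
  rw [tsum_congr hG]
  have hsum : Summable (fun p : Σ y : V d, Σ n : ℕ, (Fin n → Fin d × Bool) =>
      if p.1 = y then wlen d T p.2.1 else 0) := by
    have := summable_master hT hd y
    rw [← (pathEquiv d).summable_iff] at this
    exact this
  rw [Summable.tsum_sigma hsum]
  rw [tsum_eq_single y (fun y' hy' => by simp [hy'])]
  simpa using tsum_inner hT hd

end Master


section Decomp
variable {d : ℕ} {T : ℝ}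

def escCond (d : ℕ) (A : Set (V d)) (η : PathData d) : Prop :=
  ∀ k, 1 ≤ k → k ≤ η.len → pos d η k ∉ A

open Classical in
lemma escProbT_eq (A : Set (V d)) (x : V d) :
    escProbT d T A x = ∑' η : PathData d,
      if η.start = x ∧ escCond d A η then kWeight d T η else 0 := rfl

def conc (y : V d) {k : ℕ} (σ : Fin k → Fin d × Bool) (η : PathData d) : PathData d :=
  ⟨y, k + η.len, Fin.append σ η.steps⟩

lemma pos_conc_left (y : V d) {k : ℕ} (σ : Fin k → Fin d × Bool) (η : PathData d)
    (t : ℕ) (ht : t ≤ k) : pos d (conc y σ η) t = pathOf d k y σ t :=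
  pathOf_append_left k η.len y σ η.steps t ht

lemma pos_conc_right (y : V d) {k : ℕ} (σ : Fin k → Fin d × Bool) (η : PathData d)
    (j : ℕ) : pos d (conc y σ η) (k + j) = pathOf d η.len (pathOf d k y σ k) η.steps j :=
  pathOf_append_right k η.len y σ η.steps j

lemma kWeight_conc (y : V d) {k : ℕ} (σ : Fin k → Fin d × Bool) (η : PathData d) :
    kWeight d T (conc y σ η)
      = ((T / (T + 1)) * (1 / (2 * (d : ℝ))))^k * kWeight d T η := by
  rw [kWeight_eq, kWeight_eq]
  show wlen d T (k + η.len) = _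
  rw [wlen_add, mul_pow]

lemma conc_ne_of_lt (A : Set (V d)) (y : V d) {k k' : ℕ}
    (σ : Fin k → Fin d × Bool) (σ' : Fin k' → Fin d × Bool) (η η' : PathData d)
    (hs : η.start = pathOf d k y σ k) (hA' : pathOf d k' y σ' k' ∈ A)
    (hesc : escCond d A η) (hlt : k < k') : conc y σ η ≠ conc y σ' η' := by
  intro heq
  have hlen : k + η.len = k' + η'.len := congrArg PathData.len heq
  have hkj : k + (k' - k) = k' := by omega
  have h1 : pos d (conc y σ η) k' = pos d η (k' - k) := by
    conv_lhs => rw [← hkj]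
    rw [pos_conc_right, ← hs]
    rfl
  have h2 : pos d (conc y σ' η') k' = pathOf d k' y σ' k' :=
    pos_conc_left y σ' η' k' le_rfl
  rw [heq, h2] at h1
  exact hesc (k' - k) (by omega) (by omega) (h1 ▸ hA')

def CondP (A : Set (V d)) (y : V d) {k : ℕ} (σ : Fin k → Fin d × Bool)
    (η : PathData d) : Prop :=
  η.start = pathOf d k y σ k ∧ pathOf d k y σ k ∈ A ∧ escCond d A η

abbrev Idx (d : ℕ) (T : ℝ) (A : Set (V d)) (y : V d) (m : ℕ) : Type :=
  Σ b : Σ k : Fin (m+1), (Fin (k : ℕ) → Fin d × Bool),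
    {η : PathData d // CondP A y b.2 η}

def iota (A : Set (V d)) (y : V d) (m : ℕ) : Idx d T A y m → PathData d :=
  fun z => conc y z.1.2 z.2.1

lemma iota_inj (A : Set (V d)) (y : V d) (m : ℕ) :
    Function.Injective (iota (d := d) (T := T) A y m) := by
  rintro ⟨⟨k, σ⟩, ⟨η, hη⟩⟩ ⟨⟨k', σ'⟩, ⟨η', hη'⟩⟩ h
  have hkk : (k : ℕ) = (k' : ℕ) := by
    by_contra hne
    rcases Nat.lt_or_ge (k : ℕ) (k' : ℕ) with hlt | hge
    · exact conc_ne_of_lt A y σ σ' η η' hη.1 hη'.2.1 hη.2.2 hlt h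
    · have hlt' : (k' : ℕ) < (k : ℕ) := by omega
      exact conc_ne_of_lt A y σ' σ η' η hη'.1 hη.2.1 hη'.2.2 hlt' h.symm
  have hk : k = k' := Fin.ext hkk
  subst hk
  rcases η with ⟨s, n, st⟩
  rcases η' with ⟨s', n', st'⟩
  have hlen : (k : ℕ) + n = (k : ℕ) + n' := congrArg PathData.len h
  have hn : n = n' := by omega
  subst hn
  have h' : (PathData.mk y ((k:ℕ) + n) (Fin.append σ st))
      = PathData.mk y ((k:ℕ) + n) (Fin.append σ' st') := h
  rw [PathData.mk.injEq] at h'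
  have hst : Fin.append σ st = Fin.append σ' st' := eq_of_heq h'.2.2
  have hσ : σ = σ' := by
    funext i
    have := congrFun hst (Fin.castAdd n i)
    rwa [Fin.append_left, Fin.append_left] at this
  subst hσ
  have hstp : st = st' := by
    funext i
    have := congrFun hst (Fin.natAdd (k : ℕ) i)
    rwa [Fin.append_right, Fin.append_right] at this
  subst hstp
  have hss : s = s' := hη.1.trans hη'.1.symm
  subst hss
  rfl

open Classical in
lemma tsum_cond (hT : 0 < T) (A : Set (V d)) (y : V d) {k : ℕ}
    (σ : Fin k → Fin d × Bool) :
    ∑' η : {η : PathData d // CondP A y σ η}, kWeight d T η.1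
      = if pathOf d k y σ k ∈ A then escProbT d T A (pathOf d k y σ k) else 0 := by
  by_cases hA : pathOf d k y σ k ∈ A
  · rw [if_pos hA, escProbT_eq]
    refine (tsum_subtype {η : PathData d | CondP A y σ η} (kWeight d T)).trans ?_
    refine tsum_congr fun η => ?_
    by_cases h : η.start = pathOf d k y σ k ∧ escCond d A η
    · rw [Set.indicator_of_mem (show η ∈ {η : PathData d | CondP A y σ η} from
        ⟨h.1, hA, h.2⟩), if_pos h]
    · rw [Set.indicator_of_notMem (fun hc => h ⟨hc.1, hc.2.2⟩), if_neg h]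
  · rw [if_neg hA]
    haveI : IsEmpty {η : PathData d // CondP A y σ η} := ⟨fun z => hA z.2.2.1⟩
    exact tsum_empty

open Classical in
lemma key_ineq (hT : 0 < T) (hdd : 0 < d) (A : Set (V d)) (y : V d) (m : ℕ) :
    ∑ k ∈ Finset.range (m+1), ((T / (T + 1)) * (1 / (2 * (d : ℝ))))^k *
      (∑ σ : Fin k → Fin d × Bool,
        (if pathOf d k y σ k ∈ A then escProbT d T A (pathOf d k y σ k) else 0)) ≤ 1 := by
  set g := fun ρ : PathData d => if ρ.start = y then kWeight d T ρ else 0 with hgdef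
  have hg : Summable g := summable_master hT hdd y
  set f := fun z : Idx d T A y m =>
    ((T / (T + 1)) * (1 / (2 * (d : ℝ))))^((z.1.1 : ℕ)) * kWeight d T z.2.1 with hfdef
  have hgι : ∀ z : Idx d T A y m, g (iota A y m z) = f z := by
    rintro ⟨⟨k, σ⟩, ⟨η, hη⟩⟩
    show g (conc y σ η) = _
    have hstart : (conc y σ η).start = y := rfl
    simp only [hgdef, hstart, if_pos]
    rw [kWeight_conc]
  have hf : Summable f :=
    ((hg.comp_injective (iota_inj A y m))).congr hgι
  have hle : ∑' z, f z ≤ ∑' ρ, g ρ := by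
    refine Summable.tsum_le_tsum_of_inj (iota A y m) (iota_inj A y m)
      (fun c _ => ?_) (fun z => le_of_eq (hgι z).symm) hf hg
    by_cases h : c.start = y <;> simp [hgdef, h, kWeight_nonneg hT]
  rw [tsum_master hT hdd y] at hle
  refine le_trans (le_of_eq ?_) hle
  rw [Summable.tsum_sigma hf]
  rw [tsum_fintype]
  rw [← Finset.univ_sigma_univ, Finset.sum_sigma]
  rw [← Fin.sum_univ_eq_sum_range (fun k => ((T / (T + 1)) * (1 / (2 * (d : ℝ))))^k *
      (∑ σ : Fin k → Fin d × Bool,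
        (if pathOf d k y σ k ∈ A then escProbT d T A (pathOf d k y σ k) else 0))) (m+1)]
  refine Finset.sum_congr rfl fun k _ => ?_
  rw [Finset.mul_sum]
  refine Finset.sum_congr rfl fun σ _ => ?_
  rw [← tsum_cond hT A y σ, ← tsum_mul_left]

end Decomp


section Final
variable {d : ℕ} {T : ℝ}

lemma escProbT_nonneg (hT : 0 < T) (A : Set (V d)) (x : V d) :
    0 ≤ escProbT d T A x := by
  rw [escProbT_eq]
  refine tsum_nonneg fun η => ?_
  by_cases h : η.start = x ∧ escCond d A η
  · rw [if_pos h]; exact kWeight_nonneg hT η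
  · rw [if_neg h]

open Classical in
lemma rearrange (hT : 0 < T) (A : Set (V d)) (hfin : A.Finite) (k : ℕ) :
    ∑ y ∈ hfin.toFinset, ∑ σ : Fin k → Fin d × Bool,
        (if y + disp d k σ ∈ A then escProbT d T A (y + disp d k σ) else 0)
      = ∑ x ∈ hfin.toFinset, escProbT d T A x *
          ((Finset.univ.filter
            (fun σ : Fin k → Fin d × Bool => x + disp d k σ ∈ A)).card : ℝ) := by
  rw [Finset.sum_comm]
  have hstep : ∀ σ : Fin k → Fin d × Bool,
      ∑ y ∈ hfin.toFinset, (if y + disp d k σ ∈ A then escProbT d T A (y + disp d k σ) else 0)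
        = ∑ x ∈ hfin.toFinset, (if x - disp d k σ ∈ A then escProbT d T A x else 0) := by
    intro σ
    rw [← Finset.sum_filter, ← Finset.sum_filter]
    refine Finset.sum_bij' (fun y _ => y + disp d k σ) (fun x _ => x - disp d k σ)
      ?_ ?_ ?_ ?_ ?_
    · intro y hy
      rw [Finset.mem_filter, Set.Finite.mem_toFinset] at hy ⊢
      exact ⟨hy.2, by rw [add_sub_cancel_right]; exact hy.1⟩
    · intro x hx
      rw [Finset.mem_filter, Set.Finite.mem_toFinset] at hx ⊢
      exact ⟨hx.2, by rw [sub_add_cancel]; exact hx.1⟩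
    · intro y _; exact add_sub_cancel_right y (disp d k σ)
    · intro x _; exact sub_add_cancel x (disp d k σ)
    · intro y _; rfl
  rw [Finset.sum_congr rfl fun σ _ => hstep σ]
  rw [Finset.sum_comm]
  refine Finset.sum_congr rfl fun x hx => ?_
  rw [← Finset.sum_filter, Finset.sum_const, nsmul_eq_mul, count_neg x k A, mul_comm]

open Classical in
lemma capT_eq_sum (A : Set (V d)) (hfin : A.Finite) :
    capT d T A = ∑ x ∈ hfin.toFinset, escProbT d T A x := by
  unfold capT
  refine (tsum_subtype A (escProbT d T A)).trans ?_
  have h1 : ∑' x : V d, A.indicator (escProbT d T A) x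
      = ∑ x ∈ hfin.toFinset, A.indicator (escProbT d T A) x := by
    refine tsum_eq_sum fun x hx => ?_
    apply Set.indicator_of_notMem
    rwa [← Set.Finite.mem_toFinset hfin]
  rw [h1]
  refine Finset.sum_congr rfl fun x hx => ?_
  exact Set.indicator_of_mem (Set.Finite.mem_toFinset hfin |>.mp hx) _

end Final


section Cap
variable {d : ℕ} {T : ℝ}

lemma q_pow_ge (hT : 0 < T) (k : ℕ) (hk : (k:ℝ) ≤ T) : (1/3 : ℝ) ≤ (T/(T+1))^k := by
  have h1 : ((T+1)/T)^k ≤ 3 := by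
    have e2 : (T+1)/T ≤ Real.exp (1/T) := by
      have := Real.add_one_le_exp (1/T)
      have hTne : T ≠ 0 := hT.ne'
      calc (T+1)/T = 1/T + 1 := by field_simp; ring
        _ ≤ Real.exp (1/T) := this
    have e3 : ((T+1)/T)^k ≤ Real.exp (1/T)^k :=
      pow_le_pow_left₀ (by positivity) e2 k
    refine e3.trans ?_
    rw [← Real.exp_nat_mul]
    have hkT : (k:ℝ) * (1/T) ≤ 1 := by
      rw [mul_one_div]
      exact (div_le_one hT).mpr hk
    calc Real.exp ((k:ℝ) * (1/T)) ≤ Real.exp 1 := Real.exp_le_exp.mpr hkT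
      _ ≤ 3 := by linarith [Real.exp_one_lt_d9]
  have hmul : (T/(T+1))^k * ((T+1)/T)^k = 1 := by
    rw [← mul_pow]
    have : T/(T+1) * ((T+1)/T) = 1 := by
      field_simp
    rw [this, one_pow]
  nlinarith [hmul, h1, pow_nonneg (q_nonneg hT) k, pow_pos (by positivity : (0:ℝ) < (T+1)/T) k]

lemma ball_subset_pi (d : ℕ) (r : ℝ) :
    ball d 0 r ⊆ ↑(Fintype.piFinset fun _ : Fin d => Finset.Icc (-(⌈r⌉)) ⌈r⌉) := by
  intro z hz
  rw [Finset.mem_coe, Fintype.mem_piFinset]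
  intro i
  rw [Finset.mem_Icc]
  have h := hz i
  simp only [Pi.zero_apply, sub_zero] at h
  have h2 : |(z i : ℝ)| ≤ (⌈r⌉ : ℝ) := h.trans (Int.le_ceil r)
  rw [← Int.cast_abs, Int.cast_le] at h2
  have := abs_le.mp h2
  omega

lemma ball_finite (d : ℕ) (r : ℝ) : (ball d 0 r).Finite :=
  Set.Finite.subset (Finset.finite_toSet _) (ball_subset_pi d r)

lemma ball_card (d : ℕ) (r : ℝ) (hr : 1 ≤ r) :
    (((ball_finite d r).toFinset.card : ℝ)) ≤ (5*r)^d := by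
  have hsub : (ball_finite d r).toFinset
      ⊆ Fintype.piFinset fun _ : Fin d => Finset.Icc (-(⌈r⌉)) ⌈r⌉ := by
    intro z hz
    rw [Set.Finite.mem_toFinset] at hz
    exact ball_subset_pi d r hz
  have h1 := Finset.card_le_card hsub
  have hcardpi : (Fintype.piFinset fun _ : Fin d => Finset.Icc (-(⌈r⌉)) ⌈r⌉).card
      = ((Finset.Icc (-(⌈r⌉)) ⌈r⌉).card)^d := by
    rw [Fintype.card_piFinset]
    simp
  have hceil1 : (1:ℤ) ≤ ⌈r⌉ := by
    have : (1:ℝ) ≤ (⌈r⌉:ℝ) := le_trans hr (Int.le_ceil r)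
    exact_mod_cast this
  have hIcc : ((Finset.Icc (-(⌈r⌉)) ⌈r⌉).card : ℝ) ≤ 5*r := by
    rw [Int.card_Icc]
    have htn : (⌈r⌉ + 1 - -(⌈r⌉)).toNat = (2*⌈r⌉ + 1).toNat := by ring_nf
    have hnn : (0:ℤ) ≤ 2*⌈r⌉ + 1 := by omega
    have hc : (((⌈r⌉ + 1 - -(⌈r⌉)).toNat : ℤ) : ℝ) = ((2*⌈r⌉ + 1 : ℤ) : ℝ) := by
      rw [htn, Int.toNat_of_nonneg hnn]
    push_cast at hc ⊢
    rw [hc]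
    have hlt : (⌈r⌉ : ℝ) < r + 1 := Int.ceil_lt_add_one r
    linarith
  calc ((ball_finite d r).toFinset.card : ℝ)
      ≤ (((Finset.Icc (-(⌈r⌉)) ⌈r⌉).card)^d : ℕ) := by
        exact_mod_cast hcardpi ▸ h1
    _ = (((Finset.Icc (-(⌈r⌉)) ⌈r⌉).card : ℝ))^d := by push_cast; ring
    _ ≤ (5*r)^d := pow_le_pow_left₀ (by positivity) hIcc d

open Classical in
lemma cap_bound (hT : 0 < T) (hdd : 0 < d) (r : ℝ) (hr : 1 ≤ r) (m : ℕ)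
    (hm1 : (m:ℝ) ≤ r^2 / 2^(d+1)) (hm2 : (m:ℝ) ≤ T) :
    capT d T (ball d 0 r) * (((m:ℝ)+1) / (3 * 2^(d+1)))
      ≤ ((ball_finite d r).toFinset.card : ℝ) := by
  set A := ball d 0 r with hA
  set Af := (ball_finite d r).toFinset with hAfdef
  have hesc : ∀ x : V d, 0 ≤ escProbT d T A x := escProbT_nonneg hT A
  have hcap : capT d T A = ∑ x ∈ Af, escProbT d T A x := capT_eq_sum A (ball_finite d r)
  have hcap0 : 0 ≤ capT d T A := by
    rw [hcap]; exact Finset.sum_nonneg fun x _ => hesc x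
  have H1 : ∑ y ∈ Af, ∑ k ∈ Finset.range (m+1), ((T/(T+1)) * (1/(2*(d:ℝ))))^k *
      (∑ σ : Fin k → Fin d × Bool,
        (if pathOf d k y σ k ∈ A then escProbT d T A (pathOf d k y σ k) else 0))
      ≤ (Af.card : ℝ) := by
    calc _ ≤ ∑ _y ∈ Af, (1:ℝ) := Finset.sum_le_sum fun y _ => key_ineq hT hdd A y m
      _ = (Af.card : ℝ) := by rw [Finset.sum_const, nsmul_eq_mul, mul_one]
  have H2 : ∑ y ∈ Af, ∑ k ∈ Finset.range (m+1), ((T/(T+1)) * (1/(2*(d:ℝ))))^k *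
      (∑ σ : Fin k → Fin d × Bool,
        (if pathOf d k y σ k ∈ A then escProbT d T A (pathOf d k y σ k) else 0))
      = ∑ k ∈ Finset.range (m+1), ((T/(T+1)) * (1/(2*(d:ℝ))))^k *
        ∑ x ∈ Af, escProbT d T A x * ((Finset.univ.filter
          (fun σ : Fin k → Fin d × Bool => x + disp d k σ ∈ A)).card : ℝ) := by
    rw [Finset.sum_comm]
    refine Finset.sum_congr rfl fun k _ => ?_
    rw [← Finset.mul_sum]
    congr 1
    have hrw : ∀ y ∈ Af, ∑ σ : Fin k → Fin d × Bool,
        (if pathOf d k y σ k ∈ A then escProbT d T A (pathOf d k y σ k) else 0)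
        = ∑ σ : Fin k → Fin d × Bool,
        (if y + disp d k σ ∈ A then escProbT d T A (y + disp d k σ) else 0) := by
      intro y _
      refine Finset.sum_congr rfl fun σ _ => ?_
      rw [pathOf_self]
    rw [Finset.sum_congr rfl hrw]
    exact rearrange hT A (ball_finite d r) k
  have hqp2d : ∀ k : ℕ, ((T/(T+1)) * (1/(2*(d:ℝ))))^k * (2*(d:ℝ))^k = (T/(T+1))^k := by
    intro k
    rw [← mul_pow, mul_assoc]
    have h2d : (1/(2*(d:ℝ))) * (2*(d:ℝ)) = 1 := by
      have : (2*(d:ℝ)) ≠ 0 := by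
        have : (0:ℝ) < (d:ℝ) := by exact_mod_cast hdd
        positivity
      field_simp
    rw [h2d, mul_one]
  have H3 : ∀ k ∈ Finset.range (m+1),
      capT d T A * (1/(3 * 2^(d+1)))
        ≤ ((T/(T+1)) * (1/(2*(d:ℝ))))^k *
          ∑ x ∈ Af, escProbT d T A x * ((Finset.univ.filter
            (fun σ : Fin k → Fin d × Bool => x + disp d k σ ∈ A)).card : ℝ) := by
    intro k hk
    rw [Finset.mem_range, Nat.lt_succ_iff] at hk
    have hkm : (k:ℝ) ≤ (m:ℝ) := by exact_mod_cast hk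
    have hk' : (k:ℝ) ≤ r^2/2^(d+1) := hkm.trans hm1
    have hq3 : (1/3:ℝ) ≤ (T/(T+1))^k := q_pow_ge hT k (hkm.trans hm2)
    have hcount : ∀ x ∈ Af, ((2*(d:ℝ)))^k / 2^(d+1) ≤ ((Finset.univ.filter
        (fun σ : Fin k → Fin d × Bool => x + disp d k σ ∈ A)).card : ℝ) := by
      intro x hx
      have hxA : x ∈ A := (Set.Finite.mem_toFinset _).mp hx
      have hcm := count_main hdd r hr x hxA k hk'
      rw [div_le_iff₀ (by positivity : (0:ℝ) < 2^(d+1))]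
      linarith [hcm]
    have hsum : capT d T A * ((2*(d:ℝ))^k / 2^(d+1))
        ≤ ∑ x ∈ Af, escProbT d T A x * ((Finset.univ.filter
          (fun σ : Fin k → Fin d × Bool => x + disp d k σ ∈ A)).card : ℝ) := by
      rw [hcap, Finset.sum_mul]
      exact Finset.sum_le_sum fun x hx =>
        mul_le_mul_of_nonneg_left (hcount x hx) (hesc x)
    have hqpnn : (0:ℝ) ≤ ((T/(T+1)) * (1/(2*(d:ℝ))))^k := by positivity
    calc capT d T A * (1/(3 * 2^(d+1)))
        ≤ capT d T A * ((T/(T+1))^k / 2^(d+1)) := by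
          refine mul_le_mul_of_nonneg_left ?_ hcap0
          rw [div_le_div_iff₀ (by positivity) (by positivity)] at *
          nlinarith [hq3, pow_pos (by norm_num : (0:ℝ) < 2) (d+1)]
      _ = ((T/(T+1)) * (1/(2*(d:ℝ))))^k * (capT d T A * ((2*(d:ℝ))^k / 2^(d+1))) := by
          rw [show ((T/(T+1)) * (1/(2*(d:ℝ))))^k * (capT d T A * ((2*(d:ℝ))^k / 2^(d+1)))
            = capT d T A * ((((T/(T+1)) * (1/(2*(d:ℝ))))^k * (2*(d:ℝ))^k) / 2^(d+1)) by ring,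
            hqp2d k]
      _ ≤ _ := mul_le_mul_of_nonneg_left hsum hqpnn
  have Hfin : capT d T A * (((m:ℝ)+1) / (3 * 2^(d+1)))
      = ∑ _k ∈ Finset.range (m+1), capT d T A * (1/(3 * 2^(d+1))) := by
    rw [Finset.sum_const, Finset.card_range, nsmul_eq_mul]
    push_cast
    ring
  calc capT d T A * (((m:ℝ)+1) / (3 * 2^(d+1)))
      = ∑ _k ∈ Finset.range (m+1), capT d T A * (1/(3 * 2^(d+1))) := Hfin
    _ ≤ ∑ k ∈ Finset.range (m+1), ((T/(T+1)) * (1/(2*(d:ℝ))))^k *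
        ∑ x ∈ Af, escProbT d T A x * ((Finset.univ.filter
          (fun σ : Fin k → Fin d × Bool => x + disp d k σ ∈ A)).card : ℝ) :=
        Finset.sum_le_sum H3
    _ = _ := H2.symm
    _ ≤ (Af.card : ℝ) := H1

end Cap


set_option maxHeartbeats 2000000 in
/-- with `n = ⌊b√T⌋` and `0 < a < 0.3`, the killed capacity satisfies
`cap^{(T)}(B(0, n^a)) ≤ c · n^{a(d−2)}`. -/
theorem statement11 (d : ℕ) (hd : 3 ≤ d) (a : ℝ) (ha0 : 0 < a) (ha : a < 0.3)
    (b : ℝ) (hb : 0 < b) :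
    ∃ c : ℝ, 0 < c ∧ ∀ T : ℝ, 1 ≤ ⌊b * Real.sqrt T⌋ →
      capT d T (ball d 0 ((⌊b * Real.sqrt T⌋ : ℝ) ^ a)) ≤
        c * (⌊b * Real.sqrt T⌋ : ℝ) ^ (a * ((d : ℝ) - 2)) := by
  classical
  have ha1 : a ≤ 1 := by
    have h := ha
    norm_num at h
    linarith
  have hd2 : 2 ≤ d := by omega
  have hdd : 0 < d := by omega
  refine ⟨3 * 2^(d+1) * 5^d * (2^(d+1) + b^2), by positivity, ?_⟩
  intro T hTn
  set n : ℤ := ⌊b * Real.sqrt T⌋ with hn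
  have hn1 : (1:ℝ) ≤ (n:ℝ) := by exact_mod_cast hTn
  have hfl : (n:ℝ) ≤ b * Real.sqrt T := Int.floor_le _
  have hsqrt : 0 < Real.sqrt T := by
    by_contra h
    push_neg at h
    have : b * Real.sqrt T ≤ 0 := mul_nonpos_of_nonneg_of_nonpos hb.le h
    linarith
  have hT : 0 < T := Real.sqrt_pos.mp hsqrt
  set r : ℝ := (n:ℝ) ^ a with hrdef
  have hr1 : (1:ℝ) ≤ r := Real.one_le_rpow hn1 ha0.le
  have hr0 : (0:ℝ) < r := lt_of_lt_of_le one_pos hr1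
  have hTn2 : (n:ℝ)^2 ≤ b^2 * T := by
    have h2 : ((n:ℝ))^2 ≤ (b * Real.sqrt T)^2 := pow_le_pow_left₀ (by linarith) hfl 2
    rwa [mul_pow, Real.sq_sqrt hT.le] at h2
  have hrn : r^2 ≤ (n:ℝ)^2 := by
    have h1 : r ≤ (n:ℝ) := by
      calc r = (n:ℝ)^a := hrdef
        _ ≤ (n:ℝ)^(1:ℝ) := Real.rpow_le_rpow_of_exponent_le hn1 ha1
        _ = (n:ℝ) := Real.rpow_one _
    exact pow_le_pow_left₀ (by linarith) h1 2
  set m : ℕ := min (Nat.floor (r^2 / 2^(d+1))) (Nat.floor T) with hmdef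
  have hm1 : (m:ℝ) ≤ r^2 / 2^(d+1) := by
    have h : m ≤ Nat.floor (r^2/2^(d+1)) := min_le_left _ _
    calc (m:ℝ) ≤ (Nat.floor (r^2/2^(d+1)) : ℝ) := by exact_mod_cast h
      _ ≤ r^2/2^(d+1) := Nat.floor_le (by positivity)
  have hm2 : (m:ℝ) ≤ T := by
    have h : m ≤ Nat.floor T := min_le_right _ _
    calc (m:ℝ) ≤ (Nat.floor T : ℝ) := by exact_mod_cast h
      _ ≤ T := Nat.floor_le hT.le
  set cmin : ℝ := min ((1:ℝ)/2^(d+1)) (1/b^2) with hcmindef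
  have hcmin0 : 0 < cmin := by
    apply lt_min <;> positivity
  have hmlb : r^2 * cmin ≤ (m:ℝ) + 1 := by
    have hu : r^2 * cmin ≤ r^2/2^(d+1) := by
      calc r^2 * cmin ≤ r^2 * (1/2^(d+1)) :=
            mul_le_mul_of_nonneg_left (min_le_left _ _) (by positivity)
        _ = r^2/2^(d+1) := by ring
    have hv : r^2 * cmin ≤ T := by
      calc r^2 * cmin ≤ r^2 * (1/b^2) :=
            mul_le_mul_of_nonneg_left (min_le_right _ _) (by positivity)
        _ ≤ (n:ℝ)^2 * (1/b^2) := by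
            apply mul_le_mul_of_nonneg_right hrn
            positivity
        _ ≤ T := by
            rw [mul_one_div, div_le_iff₀ (by positivity : (0:ℝ) < b^2)]
            linarith
    rcases le_total (Nat.floor (r^2/2^(d+1))) (Nat.floor T) with hc | hc
    · have hmeq : m = Nat.floor (r^2/2^(d+1)) := min_eq_left hc
      have := Nat.lt_floor_add_one (r^2/2^(d+1))
      rw [hmeq]
      linarith [hu, this]
    · have hmeq : m = Nat.floor T := min_eq_right hc
      have := Nat.lt_floor_add_one T
      rw [hmeq]
      linarith [hv, this]
  have hcb := cap_bound hT hdd r hr1 m hm1 hm2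
  have hcard := ball_card d r hr1
  have hcap0 : 0 ≤ capT d T (ball d 0 r) := by
    rw [capT_eq_sum (ball d 0 r) (ball_finite d r)]
    exact Finset.sum_nonneg fun x _ => escProbT_nonneg hT _ x
  -- capT * (m+1) ≤ 3*2^(d+1)*5^d * r^d
  have h5 : (5*r)^d = 5^d * r^d := mul_pow 5 r d
  have hstep1 : capT d T (ball d 0 r) * ((m:ℝ)+1) ≤ 3 * 2^(d+1) * 5^d * r^d := by
    have h32 : (0:ℝ) < 3 * 2^(d+1) := by positivity
    have := mul_le_mul_of_nonneg_right (hcb.trans (hcard.trans_eq h5)) h32.le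
    calc capT d T (ball d 0 r) * ((m:ℝ)+1)
        = capT d T (ball d 0 r) * (((m:ℝ)+1) / (3 * 2^(d+1))) * (3 * 2^(d+1)) := by
          field_simp
      _ ≤ 5^d * r^d * (3 * 2^(d+1)) := this
      _ = 3 * 2^(d+1) * 5^d * r^d := by ring
  -- lower bound (m+1) and divide
  have hstep2 : capT d T (ball d 0 r) * (r^2 * cmin) ≤ 3 * 2^(d+1) * 5^d * r^d :=
    le_trans (mul_le_mul_of_nonneg_left hmlb hcap0) hstep1
  have hrd : r^d = r^(d-2) * r^2 := by
    rw [← pow_add]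
    congr 1
    omega
  have hstep3 : capT d T (ball d 0 r) * cmin ≤ 3 * 2^(d+1) * 5^d * r^(d-2) := by
    have hr2 : (0:ℝ) < r^2 := by positivity
    rw [hrd] at hstep2
    nlinarith [hstep2, hr2]
  have hcm1 : (1:ℝ) ≤ cmin * (2^(d+1) + b^2) := by
    rcases min_cases ((1:ℝ)/2^(d+1)) (1/b^2) with ⟨h, _⟩ | ⟨h, _⟩ <;>
      rw [hcmindef, h]
    · rw [one_div, inv_mul_eq_div, le_div_iff₀ (by positivity : (0:ℝ) < 2^(d+1))]
      nlinarith [sq_nonneg b]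
    · rw [one_div, inv_mul_eq_div, le_div_iff₀ (by positivity : (0:ℝ) < b^2)]
      nlinarith [pow_pos (by norm_num : (0:ℝ) < 2) (d+1)]
  have hstep4 : capT d T (ball d 0 r) ≤ 3 * 2^(d+1) * 5^d * (2^(d+1) + b^2) * r^(d-2) := by
    have hbb : (0:ℝ) < 2^(d+1) + b^2 := by positivity
    calc capT d T (ball d 0 r) = capT d T (ball d 0 r) * 1 := (mul_one _).symm
      _ ≤ capT d T (ball d 0 r) * (cmin * (2^(d+1) + b^2)) :=
          mul_le_mul_of_nonneg_left hcm1 hcap0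
      _ = capT d T (ball d 0 r) * cmin * (2^(d+1) + b^2) := by ring
      _ ≤ 3 * 2^(d+1) * 5^d * r^(d-2) * (2^(d+1) + b^2) :=
          mul_le_mul_of_nonneg_right hstep3 hbb.le
      _ = 3 * 2^(d+1) * 5^d * (2^(d+1) + b^2) * r^(d-2) := by ring
  -- convert r^(d-2) to n^(a*(d-2))
  have hconv : (n:ℝ)^(a * ((d:ℝ) - 2)) = r^(d-2) := by
    have hdc : ((d:ℝ) - 2) = ((d - 2 : ℕ) : ℝ) := by
      rw [Nat.cast_sub hd2]
      norm_num
    rw [hdc, Real.rpow_mul (by linarith : (0:ℝ) ≤ (n:ℝ)), Real.rpow_natCast]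
  rw [hconv]
  exact hstep4


end Paper
end

section
/- Let {X_j}, j = 1,...,m, be independent nonnegative-compatible random variables (not necessarily nonnegative) with A_t^+ = Σ_j E(|X_j|^t 1_{X_j > 0}) < ∞ for some 0 < t ≤ 1. Then for any x > 0 and y ≥ max_j y_j with y_j > 0, P(X_1 + ... + X_m ≥ x) ≤ Σ_j P(X_j ≥ y_j) + (e·A_t^+ / (x·y^{t−1}))^{x/y}. -/
open scoped BigOperators
open MeasureTheory


private lemma nagaev_pointwise {t h u Y : ℝ} (ht1 : t ≤ 1)
    (hh : 0 ≤ h) (hY : 0 < Y) (hu : u ≤ Y) :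
    Real.exp (h * u) ≤ 1 + Real.exp (h * Y) / Y ^ t * (if 0 < u then |u| ^ t else 0) := by
  by_cases hpos : 0 < u
  · rw [if_pos hpos, abs_of_pos hpos]
    have hYne : Y ≠ 0 := ne_of_gt hY
    have ha : (0:ℝ) ≤ 1 - u / Y := by
      have : u / Y ≤ 1 := (div_le_one hY).2 hu
      linarith
    have hb : (0:ℝ) ≤ u / Y := (div_pos hpos hY).le
    have hc := convexOn_exp.2 (Set.mem_univ (0:ℝ)) (Set.mem_univ (h * Y))
      ha hb (by ring)
    simp only [smul_eq_mul, mul_zero, zero_add, Real.exp_zero, mul_one] at hc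
    have key : u / Y * (h * Y) = h * u := by field_simp
    rw [key] at hc
    have h2 : u / Y ≤ (u / Y) ^ t := by
      have h3 := Real.rpow_le_rpow_of_exponent_ge (div_pos hpos hY) ((div_le_one hY).2 hu) ht1
      simpa using h3
    have h3 : (u / Y) ^ t = u ^ t / Y ^ t := Real.div_rpow hpos.le hY.le t
    have e0 : (0:ℝ) < Real.exp (h * Y) := Real.exp_pos _
    have h4 : u / Y * Real.exp (h * Y) ≤ Real.exp (h * Y) / Y ^ t * u ^ t := by
      calc u / Y * Real.exp (h * Y) ≤ (u / Y) ^ t * Real.exp (h * Y) :=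
            mul_le_mul_of_nonneg_right h2 e0.le
        _ = Real.exp (h * Y) / Y ^ t * u ^ t := by rw [h3]; ring
    nlinarith [hc, hb]
  · rw [if_neg hpos, mul_zero, add_zero]
    have : h * u ≤ 0 := mul_nonpos_of_nonneg_of_nonpos hh (not_lt.1 hpos)
    calc Real.exp (h * u) ≤ Real.exp 0 := Real.exp_le_exp.2 this
      _ = 1 := Real.exp_zero

open Classical in
/-- Nagaev's inequality: for independent random variables `X j` with
`A_t⁺ = Σ_j E(|X_j|^t 1_{X_j > 0}) < ∞` for some `0 < t ≤ 1`, any `x > 0`, `y_j > 0`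
and `Y ≥ max_j y_j`,
`P(ΣX_j ≥ x) ≤ Σ_j P(X_j ≥ y_j) + (e·A_t⁺/(x·Y^{t−1}))^{x/Y}`. -/
theorem statement12 {Ω : Type*} [MeasurableSpace Ω] (P : Measure Ω)
    [IsProbabilityMeasure P] (m : ℕ) (X : Fin m → Ω → ℝ)
    (hX : ∀ j, Measurable (X j))
    (hindep : ProbabilityTheory.iIndepFun X P)
    (t : ℝ) (ht0 : 0 < t) (ht1 : t ≤ 1)
    (hint : ∀ j, Integrable (fun ω => if 0 < X j ω then |X j ω| ^ t else 0) P)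
    (x : ℝ) (hx : 0 < x) (y : Fin m → ℝ) (hy : ∀ j, 0 < y j)
    (Y : ℝ) (hY : ∀ j, y j ≤ Y) :
    (P {ω | x ≤ ∑ j, X j ω}).toReal ≤
      (∑ j, (P {ω | y j ≤ X j ω}).toReal) +
        (Real.exp 1 * (∑ j, ∫ ω, (if 0 < X j ω then |X j ω| ^ t else 0) ∂P) /
            (x * Y ^ (t - 1))) ^ (x / Y) := by
  classical
  rcases Nat.eq_zero_or_pos m with hm | hm
  · subst hm
    have hset : {ω : Ω | x ≤ ∑ j : Fin 0, X j ω} = ∅ := by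
      ext ω; simp [hx.not_ge]
    rw [hset]
    simp only [measure_empty, ENNReal.toReal_zero, Finset.univ_eq_empty, Finset.sum_empty,
      mul_zero, zero_div, zero_add]
    exact Real.rpow_nonneg le_rfl _
  · have hY0 : 0 < Y := lt_of_lt_of_le (hy ⟨0, hm⟩) (hY ⟨0, hm⟩)
    set φ : Fin m → ℝ → ℝ := fun j u => if u < y j then u else 0 with hφ
    set Z : Fin m → Ω → ℝ := fun j => φ j ∘ X j with hZ
    have hφmeas : ∀ j, Measurable (φ j) := fun j =>
      Measurable.ite (measurableSet_lt measurable_id measurable_const)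
        measurable_id measurable_const
    have hZmeas : ∀ j, Measurable (Z j) := fun j => (hφmeas j).comp (hX j)
    have hZindep : ProbabilityTheory.iIndepFun Z P :=
      hindep.comp φ hφmeas
    have hZle : ∀ j ω, Z j ω ≤ Y := by
      intro j ω
      simp only [hZ, hφ, Function.comp_apply]
      split
      · exact le_of_lt (lt_of_lt_of_le (by assumption) (hY j))
      · exact hY0.le
    set A : ℝ := ∑ j, ∫ ω, (if 0 < X j ω then |X j ω| ^ t else 0) ∂P with hA
    have hAj0 : ∀ j, (0:ℝ) ≤ ∫ ω, (if 0 < X j ω then |X j ω| ^ t else 0) ∂P := by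
      intro j
      refine integral_nonneg fun ω => ?_
      simp only [Pi.zero_apply]; split <;> positivity
    have hA0 : 0 ≤ A := Finset.sum_nonneg fun j _ => hAj0 j
    have hZint : ∀ h : ℝ, 0 ≤ h → ∀ j,
        Integrable (fun ω => Real.exp (h * Z j ω)) P := by
      intro h hh j
      refine Integrable.mono' (integrable_const (Real.exp (h * Y)))
        (((hZmeas j).const_mul h).exp.aestronglyMeasurable)
        (Filter.Eventually.of_forall fun ω => ?_)
      rw [Real.norm_eq_abs, Real.abs_exp]
      exact Real.exp_le_exp.2 (mul_le_mul_of_nonneg_left (hZle j ω) hh)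
    have hmain : ∀ h : ℝ, 0 ≤ h → (P {ω | x ≤ ∑ j, Z j ω}).toReal ≤
        Real.exp (-h * x + Real.exp (h * Y) / Y ^ t * A) := by
      intro h hh
      have hint_sum : Integrable (fun ω => Real.exp (h * (∑ j, Z j) ω)) P :=
        hZindep.integrable_exp_mul_sum hZmeas (fun j _ => hZint h hh j)
      have hcher := ProbabilityTheory.measure_ge_le_exp_mul_mgf
        (μ := P) (X := ∑ j, Z j) x hh hint_sum
      have hsets : {ω | x ≤ (∑ j, Z j) ω} = {ω | x ≤ ∑ j, Z j ω} := by
        ext ω; simp [Finset.sum_apply]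
      rw [hsets] at hcher
      have hcnn : (0:ℝ) ≤ Real.exp (h * Y) / Y ^ t := by positivity
      have hmgf : ProbabilityTheory.mgf (∑ j, Z j) P h ≤
          Real.exp (Real.exp (h * Y) / Y ^ t * A) := by
        rw [hZindep.mgf_sum hZmeas Finset.univ]
        calc ∏ j, ProbabilityTheory.mgf (Z j) P h
            ≤ ∏ j, Real.exp (Real.exp (h * Y) / Y ^ t *
                ∫ ω, (if 0 < X j ω then |X j ω| ^ t else 0) ∂P) := by
              refine Finset.prod_le_prod (fun j _ => ProbabilityTheory.mgf_nonneg)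
                (fun j _ => ?_)
              have hle : ∀ ω, Real.exp (h * Z j ω) ≤
                  1 + Real.exp (h * Y) / Y ^ t *
                    (if 0 < X j ω then |X j ω| ^ t else 0) := by
                intro ω
                refine (nagaev_pointwise ht1 hh hY0 (hZle j ω)).trans ?_
                refine add_le_add_right (mul_le_mul_of_nonneg_left ?_ hcnn) 1
                by_cases hlt : X j ω < y j
                · simp only [hZ, hφ, Function.comp_apply, if_pos hlt]
                  exact le_rfl
                · simp only [hZ, hφ, Function.comp_apply, if_neg hlt, lt_irrefl,
                    if_false]
                  split <;> positivity
              have hmono : ProbabilityTheory.mgf (Z j) P h ≤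
                  1 + Real.exp (h * Y) / Y ^ t *
                    ∫ ω, (if 0 < X j ω then |X j ω| ^ t else 0) ∂P := by
                have hint2 : Integrable (fun ω => 1 + Real.exp (h * Y) / Y ^ t *
                    (if 0 < X j ω then |X j ω| ^ t else 0)) P :=
                  (integrable_const 1).add ((hint j).const_mul _)
                calc ProbabilityTheory.mgf (Z j) P h
                    = ∫ ω, Real.exp (h * Z j ω) ∂P := rfl
                  _ ≤ ∫ ω, (1 + Real.exp (h * Y) / Y ^ t *
                      (if 0 < X j ω then |X j ω| ^ t else 0)) ∂P :=
                    integral_mono (hZint h hh j) hint2 hle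
                  _ = 1 + Real.exp (h * Y) / Y ^ t *
                      ∫ ω, (if 0 < X j ω then |X j ω| ^ t else 0) ∂P := by
                    rw [integral_add (integrable_const 1) ((hint j).const_mul _),
                      integral_const, MeasureTheory.integral_const_mul]
                    simp
              refine hmono.trans ?_
              have := Real.add_one_le_exp (Real.exp (h * Y) / Y ^ t *
                ∫ ω, (if 0 < X j ω then |X j ω| ^ t else 0) ∂P)
              linarith
          _ = Real.exp (Real.exp (h * Y) / Y ^ t * A) := by
              rw [← Real.exp_sum]
              congr 1
              rw [hA, Finset.mul_sum]
      calc (P {ω | x ≤ ∑ j, Z j ω}).toReal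
          ≤ Real.exp (-h * x) * ProbabilityTheory.mgf (∑ j, Z j) P h := hcher
        _ ≤ Real.exp (-h * x) * Real.exp (Real.exp (h * Y) / Y ^ t * A) :=
            mul_le_mul_of_nonneg_left hmgf (Real.exp_pos _).le
        _ = Real.exp (-h * x + Real.exp (h * Y) / Y ^ t * A) := by
            rw [← Real.exp_add]
    have hstep1 : (P {ω | x ≤ ∑ j, X j ω}).toReal ≤
        (∑ j, (P {ω | y j ≤ X j ω}).toReal) + (P {ω | x ≤ ∑ j, Z j ω}).toReal := by
      have hsub : {ω | x ≤ ∑ j, X j ω} ⊆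
          (⋃ j, {ω | y j ≤ X j ω}) ∪ {ω | x ≤ ∑ j, Z j ω} := by
        intro ω hω
        by_cases hc : ∃ j, y j ≤ X j ω
        · exact Or.inl (Set.mem_iUnion.2 ⟨hc.choose, hc.choose_spec⟩)
        · push_neg at hc
          right
          have hzx : ∀ j, Z j ω = X j ω := fun j => if_pos (hc j)
          simpa only [Set.mem_setOf_eq, hzx] using hω
      have h1 : P {ω | x ≤ ∑ j, X j ω} ≤
          (∑ j, P {ω | y j ≤ X j ω}) + P {ω | x ≤ ∑ j, Z j ω} :=
        (measure_mono hsub).trans ((measure_union_le _ _).trans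
          (add_le_add_left (measure_iUnion_fintype_le _ _) _))
      have hne : (∑ j, P {ω | y j ≤ X j ω}) + P {ω | x ≤ ∑ j, Z j ω} ≠ ⊤ := by
        refine ENNReal.add_ne_top.2 ⟨?_, measure_ne_top _ _⟩
        exact (ENNReal.sum_lt_top.2 fun j _ => measure_lt_top _ _).ne
      have h2 := ENNReal.toReal_mono hne h1
      rwa [ENNReal.toReal_add (ENNReal.sum_lt_top.2 fun j _ =>
          measure_lt_top _ _).ne (measure_ne_top _ _),
        ENNReal.toReal_sum (fun j _ => measure_ne_top _ _)] at h2
    refine hstep1.trans (add_le_add_right ?_ _)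
    have hp1 : (P {ω | x ≤ ∑ j, Z j ω}).toReal ≤ 1 := by
      rw [← ENNReal.toReal_one]
      exact ENNReal.toReal_mono ENNReal.one_ne_top prob_le_one
    rcases hA0.eq_or_lt with hAz | hApos
    · have hp0 : (P {ω | x ≤ ∑ j, Z j ω}).toReal ≤ 0 := by
        by_contra hc
        push_neg at hc
        set p := (P {ω | x ≤ ∑ j, Z j ω}).toReal with hp
        have hlog : Real.log p ≤ 0 := Real.log_nonpos hc.le hp1
        have hh : 0 ≤ (1 - Real.log p) / x := div_nonneg (by linarith) hx.le
        have hb := hmain _ hh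
        rw [← hAz, mul_zero, add_zero] at hb
        have he : -((1 - Real.log p) / x) * x = Real.log p - 1 := by
          field_simp
          ring
        rw [he] at hb
        have : Real.exp (Real.log p - 1) < p := by
          rw [Real.exp_sub, Real.exp_log hc]
          have h1e : (1:ℝ) < Real.exp 1 := by
            have := Real.add_one_le_exp 1; linarith
          rw [div_lt_iff₀ (by linarith)]
          nlinarith
        linarith
      refine le_trans hp0 ?_
      rw [← hAz, mul_zero, zero_div]
      exact Real.rpow_nonneg le_rfl _
    · set d := x * Y ^ (t - 1) with hd
      have hdpos : 0 < d := mul_pos hx (Real.rpow_pos_of_pos hY0 _)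
      by_cases hcase : d ≤ A
      · refine hp1.trans (Real.one_le_rpow ?_ (div_nonneg hx.le hY0.le))
        rw [le_div_iff₀ hdpos]
        have h1e : (1:ℝ) ≤ Real.exp 1 := by
          have := Real.add_one_le_exp 1; linarith
        nlinarith
      · push_neg at hcase
        set r := d / A with hr
        have hr1 : 1 < r := (one_lt_div hApos).2 hcase
        have hh : 0 ≤ Real.log r / Y := div_nonneg (Real.log_nonneg hr1.le) hY0.le
        have hbound := hmain _ hh
        have hhY : Real.log r / Y * Y = Real.log r := by field_simp
        have hYt : (0:ℝ) < Y ^ t := Real.rpow_pos_of_pos hY0 t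
        have hbpos : 0 < Real.exp 1 * A / d := by positivity
        have hexp : -(Real.log r / Y) * x + Real.exp (Real.log r / Y * Y) / Y ^ t * A =
            x / Y * Real.log (Real.exp 1 * A / d) := by
          rw [hhY, Real.exp_log (lt_trans one_pos hr1)]
          have h1 : r / Y ^ t * A = x / Y := by
            rw [hr, hd]
            have hyt1 : Y ^ (t - 1) = Y ^ t / Y := by
              rw [Real.rpow_sub hY0, Real.rpow_one]
            rw [hyt1]
            field_simp
          have h2 : Real.log (Real.exp 1 * A / d) = 1 - Real.log r := by
            rw [Real.log_div (by positivity) hdpos.ne',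
              Real.log_mul (Real.exp_pos 1).ne' hApos.ne', Real.log_exp,
              hr, Real.log_div hdpos.ne' hApos.ne']
            ring
          rw [h2, h1]
          field_simp
          ring
        rw [hexp] at hbound
        refine hbound.trans ?_
        rw [Real.rpow_def_of_pos hbpos, mul_comm]
end

section
/- Let events E_1, ..., E_{2^m} satisfy the recursive bound P(∩_{i=1}^{2^j} E_i^{(block)}) ≤ P(∩ first half)·P(∩ second half) + 2e^{−cT·2^j} at every dyadic level j ≤ m, and P(E_i) ≤ ε for each i with ε + 2e^{−cT} < 1. Then P(∩_{i=1}^{2^m} E_i) ≤ (ε + 2e^{−cT})^{2^m}. -/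
open scoped BigOperators
open MeasureTheory

/-- dyadic decoupling induction: if every aligned dyadic block of events
satisfies `P(block) ≤ P(left half)·P(right half) + 2e^{−cT·2^j}` and each single event
has probability at most `ε` with `ε + 2e^{−cT} < 1`, then
`P(∩_{i<2^m} E_i) ≤ (ε + 2e^{−cT})^{2^m}`. -/
theorem statement16 {Ω : Type*} [MeasurableSpace Ω] (P : Measure Ω)
    [IsProbabilityMeasure P] (m : ℕ) (E : ℕ → Set Ω)
    (c T ε : ℝ) (hc : 0 < c) (hT : 0 < T) (hε : 0 < ε)
    (hsmall : ε + 2 * Real.exp (-c * T) < 1)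
    (hrec : ∀ j, 1 ≤ j → j ≤ m → ∀ i, i < 2 ^ (m - j) →
      (P (⋂ l ∈ Finset.Ico (i * 2 ^ j) ((i + 1) * 2 ^ j), E l)).toReal ≤
        (P (⋂ l ∈ Finset.Ico (i * 2 ^ j) (i * 2 ^ j + 2 ^ (j - 1)), E l)).toReal *
          (P (⋂ l ∈ Finset.Ico (i * 2 ^ j + 2 ^ (j - 1)) ((i + 1) * 2 ^ j), E l)).toReal +
          2 * Real.exp (-c * T * (2 : ℝ) ^ j))
    (hone : ∀ i, i < 2 ^ m → (P (E i)).toReal ≤ ε) :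
    (P (⋂ l ∈ Finset.Ico 0 (2 ^ m), E l)).toReal ≤
      (ε + 2 * Real.exp (-c * T)) ^ (2 ^ m) := by
  set β := Real.exp (-c * T) with hβ
  set δ := ε + 2 * β with hδ
  have hβpos : 0 < β := Real.exp_pos _
  have hδβ : 2 * β ≤ δ := by nlinarith
  have hδpos : 0 < δ := by nlinarith
  have key : ∀ j, j ≤ m → ∀ i, i < 2 ^ (m - j) →
      (P (⋂ l ∈ Finset.Ico (i * 2 ^ j) ((i + 1) * 2 ^ j), E l)).toReal ≤
        δ ^ (2 ^ j) - β ^ (2 ^ j) := by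
    intro j
    induction j with
    | zero =>
      intro _ i hi
      simp only [Nat.sub_zero] at hi
      simp only [pow_zero, mul_one, pow_one]
      have hset : (⋂ l ∈ Finset.Ico i (i + 1), E l) = E i := by
        simp
      rw [hset]
      have := hone i hi
      nlinarith
    | succ j ih =>
      intro hj i hi
      have hj' : j ≤ m := le_trans (Nat.le_succ j) hj
      have hmj : m - j = (m - (j + 1)) + 1 := by omega
      have h2i : 2 * i < 2 ^ (m - j) := by
        rw [hmj, pow_succ]; omega
      have h2i1 : 2 * i + 1 < 2 ^ (m - j) := by
        rw [hmj, pow_succ]; omega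
      have e1 : (2 * i) * 2 ^ j = i * 2 ^ (j + 1) := by ring
      have e2 : (2 * i + 1) * 2 ^ j = i * 2 ^ (j + 1) + 2 ^ j := by ring
      have e3 : (2 * i + 1 + 1) * 2 ^ j = (i + 1) * 2 ^ (j + 1) := by ring
      have ihL := ih hj' (2 * i) h2i
      have ihR := ih hj' (2 * i + 1) h2i1
      rw [e1, e2] at ihL
      rw [e2, e3] at ihR
      have hmain := hrec (j + 1) (Nat.succ_le_succ (Nat.zero_le j)) hj i hi
      simp only [Nat.add_sub_cancel] at hmain
      have hexp : Real.exp (-c * T * (2 : ℝ) ^ (j + 1)) = β ^ (2 ^ (j + 1)) := by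
        rw [hβ, ← Real.exp_nat_mul]
        congr 1
        push_cast
        ring
      rw [hexp] at hmain
      have hL0 : (0:ℝ) ≤
          (P (⋂ l ∈ Finset.Ico (i * 2 ^ (j + 1)) (i * 2 ^ (j + 1) + 2 ^ j), E l)).toReal :=
        ENNReal.toReal_nonneg
      have hR0 : (0:ℝ) ≤
          (P (⋂ l ∈ Finset.Ico (i * 2 ^ (j + 1) + 2 ^ j) ((i + 1) * 2 ^ (j + 1)), E l)).toReal :=
        ENNReal.toReal_nonneg
      have hbknn : (0:ℝ) ≤ β ^ (2 ^ j) := by positivity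
      have hkey : 2 * β ^ (2 ^ j) ≤ δ ^ (2 ^ j) := by
        have h1 : (2 * β) ^ (2 ^ j) ≤ δ ^ (2 ^ j) :=
          pow_le_pow_left₀ (by positivity) hδβ _
        have h2 : (2:ℝ) ≤ 2 ^ (2 ^ j) :=
          le_self_pow₀ one_le_two (Nat.two_pow_pos j).ne'
        have h3 : 2 * β ^ (2 ^ j) ≤ (2:ℝ) ^ (2 ^ j) * β ^ (2 ^ j) :=
          mul_le_mul_of_nonneg_right h2 hbknn
        rw [← mul_pow] at h3
        linarith
      have hLR :
          (P (⋂ l ∈ Finset.Ico (i * 2 ^ (j + 1)) (i * 2 ^ (j + 1) + 2 ^ j), E l)).toReal *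
            (P (⋂ l ∈ Finset.Ico (i * 2 ^ (j + 1) + 2 ^ j) ((i + 1) * 2 ^ (j + 1)), E l)).toReal ≤
          (δ ^ (2 ^ j) - β ^ (2 ^ j)) * (δ ^ (2 ^ j) - β ^ (2 ^ j)) :=
        mul_le_mul ihL ihR hR0 (hL0.trans ihL)
      have hsq : ∀ x : ℝ, x ^ (2 ^ (j + 1)) = (x ^ (2 ^ j)) ^ 2 := fun x => by
        rw [pow_succ, pow_mul]
      rw [hsq β] at hmain
      rw [hsq δ, hsq β]
      nlinarith [mul_le_mul_of_nonneg_right hkey hbknn]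
  have hfin := key m le_rfl 0 (by simp)
  simp only [zero_mul, zero_add, one_mul] at hfin
  have : (0:ℝ) ≤ β ^ (2 ^ m) := by positivity
  linarith
end
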